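/- arXiv:2001.06838 — 7 statements merged into one kernel-verified Lean document; each statement's English description precedes it below -/
import Mathlib

section
/- Let (ξ_t)_{t≥1} be a sequence of independent real-valued random variables that are uniformly bounded (there exists C > 0 with |ξ_t| ≤ C almost surely for every t), and suppose ξ_t converges in distribution to a random variable ξ, i.e. for every ε ∈ ℝ, lim_{t→∞} P(ξ_t ≤ ε) = P(ξ ≤ ε). Fix α ∈ (0,1). Then the expectation of the exponential moving average statistic converges to the expectation of the limit: lim_{t→∞} E[E_t] = E[ξ]. -/
open MeasureTheory ProbabilityTheory Filter

/-- Geometric sums are bounded by `(1-α)⁻¹`. -/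
private lemma geom_range_le {α : ℝ} (hα0 : 0 ≤ α) (hα1 : α < 1) (n : ℕ) :
    ∑ j ∈ Finset.range n, α ^ j ≤ (1 - α)⁻¹ := by
  have h1 : (0:ℝ) < 1 - α := by linarith
  rw [geom_sum_eq hα1.ne n]
  rw [show (α ^ n - 1) / (α - 1) = (1 - α ^ n) / (1 - α) by
    rw [← neg_div_neg_eq]; ring_nf]
  rw [inv_eq_one_div]
  have hp : (0:ℝ) ≤ α ^ n := pow_nonneg hα0 n
  gcongr
  linarith

/-- Weighted geometric tail sums are bounded by `(1-α)⁻¹`. -/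
private lemma ema_weight_sum_le {α : ℝ} (hα0 : 0 ≤ α) (hα1 : α < 1) (N t : ℕ) :
    ∑ i ∈ Finset.Ico N (t + 1), α ^ (t - i) ≤ (1 - α)⁻¹ := by
  have h1 : ∑ i ∈ Finset.Ico N (t + 1), α ^ (t - i)
      ≤ ∑ i ∈ Finset.range (t + 1), α ^ (t - i) := by
    apply Finset.sum_le_sum_of_subset_of_nonneg
    · intro i hi
      simp only [Finset.mem_Ico] at hi
      exact Finset.mem_range.2 hi.2
    · intro i _ _; positivity
  have h2 : ∑ i ∈ Finset.range (t + 1), α ^ (t - i)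
      = ∑ j ∈ Finset.range (t + 1), α ^ j := by
    have := Finset.sum_range_reflect (fun j => α ^ j) (t + 1)
    simpa using this
  calc ∑ i ∈ Finset.Ico N (t + 1), α ^ (t - i)
      ≤ ∑ j ∈ Finset.range (t + 1), α ^ j := h1.trans_eq h2
    _ ≤ (1 - α)⁻¹ := geom_range_le hα0 hα1 _

/-- If `b → 0` and `b` is bounded, the exponentially weighted sums tend to `0`. -/
private lemma tendsto_ema_aux {α : ℝ} (hα0 : 0 < α) (hα1 : α < 1) {b : ℕ → ℝ} {M : ℝ}
    (hM : ∀ i, |b i| ≤ M) (hb : Tendsto b atTop (nhds 0)) :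
    Tendsto (fun t => ∑ i ∈ Finset.Icc 1 t, α ^ (t - i) * b i) atTop (nhds 0) := by
  have hM0 : 0 ≤ M := le_trans (abs_nonneg _) (hM 0)
  have h1α : (0:ℝ) < 1 - α := by linarith
  rw [Metric.tendsto_atTop] at hb ⊢
  intro ε hε
  have hε2 : 0 < (1 - α) * ε / 2 := by positivity
  obtain ⟨N₀, hN₀⟩ := hb _ hε2
  set N : ℕ := N₀ + 1 with hN
  have hpow : Tendsto (fun k => (N : ℝ) * M * α ^ k) atTop (nhds 0) := by
    simpa using (tendsto_pow_atTop_nhds_zero_of_lt_one hα0.le hα1).const_mul ((N : ℝ) * M)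
  rw [Metric.tendsto_atTop] at hpow
  obtain ⟨K, hK⟩ := hpow (ε / 2) (by linarith)
  refine ⟨N + K, fun t ht => ?_⟩
  have htN : N ≤ t := le_trans (Nat.le_add_right N K) ht
  -- split the sum
  have hsplit : ∑ i ∈ Finset.Icc 1 t, α ^ (t - i) * b i
      = ∑ i ∈ Finset.Ico 1 N, α ^ (t - i) * b i
        + ∑ i ∈ Finset.Ico N (t + 1), α ^ (t - i) * b i := by
    rw [← Finset.Ico_add_one_right_eq_Icc]
    exact (Finset.sum_Ico_consecutive _ (by omega) (by omega)).symm
  -- first part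
  have hfirst : |∑ i ∈ Finset.Ico 1 N, α ^ (t - i) * b i| ≤ (N : ℝ) * M * α ^ (t - N) := by
    calc |∑ i ∈ Finset.Ico 1 N, α ^ (t - i) * b i|
        ≤ ∑ i ∈ Finset.Ico 1 N, |α ^ (t - i) * b i| := Finset.abs_sum_le_sum_abs _ _
      _ ≤ ∑ i ∈ Finset.Ico 1 N, α ^ (t - N) * M := by
          apply Finset.sum_le_sum
          intro i hi
          simp only [Finset.mem_Ico] at hi
          rw [abs_mul, abs_pow, abs_of_nonneg hα0.le]
          apply mul_le_mul ?_ (hM i) (abs_nonneg _) (pow_nonneg hα0.le _)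
          exact pow_le_pow_of_le_one hα0.le hα1.le (by omega)
      _ = ((Finset.Ico 1 N).card : ℝ) * (α ^ (t - N) * M) := by
          rw [Finset.sum_const, nsmul_eq_mul]
      _ ≤ (N : ℝ) * (α ^ (t - N) * M) := by
          apply mul_le_mul_of_nonneg_right ?_ (by positivity)
          exact_mod_cast Nat.cast_le.mpr ((Nat.card_Ico 1 N).le.trans (Nat.sub_le N 1))
      _ = (N : ℝ) * M * α ^ (t - N) := by ring
  -- second part
  have hsecond : |∑ i ∈ Finset.Ico N (t + 1), α ^ (t - i) * b i| ≤ ε / 2 := by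
    calc |∑ i ∈ Finset.Ico N (t + 1), α ^ (t - i) * b i|
        ≤ ∑ i ∈ Finset.Ico N (t + 1), |α ^ (t - i) * b i| := Finset.abs_sum_le_sum_abs _ _
      _ ≤ ∑ i ∈ Finset.Ico N (t + 1), α ^ (t - i) * ((1 - α) * ε / 2) := by
          apply Finset.sum_le_sum
          intro i hi
          simp only [Finset.mem_Ico] at hi
          rw [abs_mul, abs_pow, abs_of_nonneg hα0.le]
          apply mul_le_mul_of_nonneg_left ?_ (pow_nonneg hα0.le _)
          have := hN₀ i (by omega)
          rw [Real.dist_eq, sub_zero] at this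
          exact this.le
      _ = (∑ i ∈ Finset.Ico N (t + 1), α ^ (t - i)) * ((1 - α) * ε / 2) :=
          (Finset.sum_mul _ _ _).symm
      _ ≤ (1 - α)⁻¹ * ((1 - α) * ε / 2) := by
          apply mul_le_mul_of_nonneg_right (ema_weight_sum_le hα0.le hα1 N t) (by positivity)
      _ = ε / 2 := by field_simp
  -- combine
  rw [Real.dist_eq, sub_zero, hsplit]
  have hKbd : (N : ℝ) * M * α ^ (t - N) < ε / 2 := by
    have := hK (t - N) (by omega)
    rw [Real.dist_eq, sub_zero] at this
    calc (N : ℝ) * M * α ^ (t - N) ≤ |(N : ℝ) * M * α ^ (t - N)| := le_abs_self _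
      _ < ε / 2 := this
  calc |∑ i ∈ Finset.Ico 1 N, α ^ (t - i) * b i
        + ∑ i ∈ Finset.Ico N (t + 1), α ^ (t - i) * b i|
      ≤ |∑ i ∈ Finset.Ico 1 N, α ^ (t - i) * b i|
        + |∑ i ∈ Finset.Ico N (t + 1), α ^ (t - i) * b i| := abs_add_le _ _
    _ < ε := by linarith [hfirst.trans_lt hKbd]

/-- Representation of the mean of a bounded random variable via its CDF. -/
private lemma mean_repr {Ω : Type*} [MeasurableSpace Ω] (μ : Measure Ω) [IsProbabilityMeasure μ]
    {f : Ω → ℝ} (hf : Measurable f) {C : ℝ} (hC : 0 < C) (hbd : ∀ᵐ ω ∂μ, |f ω| ≤ C) :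
    (∫ ω, f ω ∂μ) + C
      = ∫ s in Set.Ioc (0:ℝ) (2*C), (1 - (μ {ω | f ω ≤ s - C}).toReal) := by
  have hint : Integrable f μ :=
    (integrable_const C).mono' hf.aestronglyMeasurable
      (by simpa [Real.norm_eq_abs] using hbd)
  have hintg : Integrable (fun ω => f ω + C) μ := hint.add (integrable_const C)
  have hnn : 0 ≤ᵐ[μ] fun ω => f ω + C := by
    filter_upwards [hbd] with ω h
    have := (abs_le.1 h).1
    simp only [Pi.zero_apply]; linarith
  have hub : (fun ω => f ω + C) ≤ᵐ[μ] fun _ => 2 * C := by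
    filter_upwards [hbd] with ω h
    have := (abs_le.1 h).2
    show f ω + C ≤ 2 * C
    linarith
  have key := hintg.integral_eq_integral_Ioc_meas_le hnn hub
  have hadd : ∫ ω, (f ω + C) ∂μ = (∫ ω, f ω ∂μ) + C := by
    rw [integral_add hint (integrable_const C), integral_const]
    simp
  rw [← hadd, key]
  apply integral_congr_ae
  filter_upwards [meas_le_ae_eq_meas_lt μ (volume.restrict (Set.Ioc 0 (2*C)))
    (fun ω => f ω + C)] with s hs
  rw [measureReal_def, hs]
  have hset : {a | s < f a + C} = {ω | f ω ≤ s - C}ᶜ := by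
    ext ω
    simp only [Set.mem_setOf_eq, Set.mem_compl_iff, not_le]
    constructor <;> intro h <;> linarith
  have hms : MeasurableSet {ω | f ω ≤ s - C} := hf measurableSet_Iic
  rw [hset, prob_compl_eq_one_sub hms,
    ENNReal.toReal_sub_of_le prob_le_one ENNReal.one_ne_top, ENNReal.toReal_one]

/-- The limit in distribution of uniformly bounded random variables is a.e. bounded. -/
private lemma lim_bdd {Ω : Type*} [MeasurableSpace Ω] (μ : Measure Ω) [IsProbabilityMeasure μ]
    (ξ : ℕ → Ω → ℝ) (ξlim : Ω → ℝ)
    (hmeas : ∀ t, Measurable (ξ t)) (hmeaslim : Measurable ξlim)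
    (C : ℝ) (hC : 0 < C)
    (hbdd : ∀ t, ∀ᵐ ω ∂μ, |ξ t ω| ≤ C)
    (hconv : ∀ ε : ℝ, Tendsto (fun t => (μ {ω | ξ t ω ≤ ε}).toReal) atTop
      (nhds ((μ {ω | ξlim ω ≤ ε}).toReal))) :
    ∀ᵐ ω ∂μ, |ξlim ω| ≤ C := by
  -- upper bound
  have hup : ∀ t, (μ {ω | ξ t ω ≤ C}).toReal = 1 := by
    intro t
    have h0 : μ {ω | ξ t ω ≤ C}ᶜ = 0 := by
      refine measure_mono_null ?_ (ae_iff.1 (hbdd t))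
      intro ω hω
      simp only [Set.mem_compl_iff, Set.mem_setOf_eq, not_le] at hω ⊢
      exact lt_of_lt_of_le hω (le_abs_self _)
    have h1 : μ {ω | ξ t ω ≤ C} = 1 :=
      (prob_compl_eq_zero_iff ((hmeas t) measurableSet_Iic)).mp h0
    rw [h1, ENNReal.toReal_one]
  have hupC : (μ {ω | ξlim ω ≤ C}).toReal = 1 := by
    have h := hconv C
    rw [tendsto_congr hup] at h
    exact (tendsto_nhds_unique h tendsto_const_nhds)
  have hlimup : μ {ω | C < ξlim ω} = 0 := by
    have h1 : μ {ω | ξlim ω ≤ C} = 1 := (ENNReal.toReal_eq_one_iff _).mp hupC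
    have : {ω | C < ξlim ω} = {ω | ξlim ω ≤ C}ᶜ := by
      ext ω; simp [not_le]
    rw [this]
    exact (prob_compl_eq_zero_iff (hmeaslim measurableSet_Iic)).mpr h1
  -- lower bound
  have hlow : ∀ n : ℕ, μ {ω | ξlim ω ≤ -C - 1 / (n + 1)} = 0 := by
    intro n
    have hn : (0:ℝ) < 1 / (n + 1) := by positivity
    have hz : ∀ t, (μ {ω | ξ t ω ≤ -C - 1 / (n + 1)}).toReal = 0 := by
      intro t
      have h0 : μ {ω | ξ t ω ≤ -C - 1 / (n + 1)} = 0 := by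
        refine measure_mono_null ?_ (ae_iff.1 (hbdd t))
        intro ω hω
        simp only [Set.mem_setOf_eq] at hω ⊢
        intro h
        have := (abs_le.1 h).1
        linarith
      rw [h0, ENNReal.toReal_zero]
    have h := hconv (-C - 1 / (n + 1))
    rw [tendsto_congr hz] at h
    have h0 : (μ {ω | ξlim ω ≤ -C - 1 / (n + 1)}).toReal = 0 :=
      tendsto_nhds_unique h tendsto_const_nhds
    rcases ENNReal.toReal_eq_zero_iff _ |>.mp h0 with h | h
    · exact h
    · exact absurd h (measure_ne_top μ _)
  have hlimlow : μ {ω | ξlim ω < -C} = 0 := by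
    refine measure_mono_null ?_ (measure_iUnion_null hlow)
    intro ω hω
    simp only [Set.mem_setOf_eq] at hω
    obtain ⟨n, hn⟩ := exists_nat_one_div_lt (show (0:ℝ) < -C - ξlim ω by linarith)
    exact Set.mem_iUnion.2 ⟨n, by simp only [Set.mem_setOf_eq]; linarith⟩
  rw [ae_iff]
  refine measure_mono_null ?_ (measure_union_null hlimup hlimlow)
  intro ω hω
  simp only [Set.mem_setOf_eq, not_le] at hω
  rcases lt_abs.mp hω with h | h
  · exact Or.inl h
  · exact Or.inr (by simpa [Set.mem_setOf_eq] using (by linarith : ξlim ω < -C))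


/-- Convergence of means from convergence of CDFs for uniformly bounded variables. -/
private lemma mean_tendsto {Ω : Type*} [MeasurableSpace Ω] (μ : Measure Ω)
    [IsProbabilityMeasure μ]
    (ξ : ℕ → Ω → ℝ) (ξlim : Ω → ℝ)
    (hmeas : ∀ t, Measurable (ξ t)) (hmeaslim : Measurable ξlim)
    (C : ℝ) (hC : 0 < C)
    (hbdd : ∀ t, ∀ᵐ ω ∂μ, |ξ t ω| ≤ C)
    (hlimbdd : ∀ᵐ ω ∂μ, |ξlim ω| ≤ C)
    (hconv : ∀ ε : ℝ, Tendsto (fun t => (μ {ω | ξ t ω ≤ ε}).toReal) atTop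
      (nhds ((μ {ω | ξlim ω ≤ ε}).toReal))) :
    Tendsto (fun t => ∫ ω, ξ t ω ∂μ) atTop (nhds (∫ ω, ξlim ω ∂μ)) := by
  have hmono : ∀ (f : Ω → ℝ), Measurable (fun s : ℝ => 1 - (μ {ω | f ω ≤ s - C}).toReal) := by
    intro f
    have : Monotone (fun s : ℝ => (μ {ω | f ω ≤ s - C}).toReal) := by
      intro x y hxy
      exact ENNReal.toReal_mono (measure_ne_top μ _)
        (measure_mono fun ω (h : _ ≤ x - C) =>
          show _ ≤ y - C from le_trans h (sub_le_sub_right hxy C))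
    exact measurable_const.sub this.measurable
  have hboundle : ∀ (f : Ω → ℝ) (s : ℝ), ‖1 - (μ {ω | f ω ≤ s - C}).toReal‖ ≤ 1 := by
    intro f s
    rw [Real.norm_eq_abs, abs_le]
    have h0 : (0:ℝ) ≤ (μ {ω | f ω ≤ s - C}).toReal := ENNReal.toReal_nonneg
    have h1 : (μ {ω | f ω ≤ s - C}).toReal ≤ 1 :=
      (ENNReal.toReal_mono ENNReal.one_ne_top prob_le_one).trans_eq ENNReal.toReal_one
    constructor <;> linarith
  have hdct : Tendsto
      (fun t => ∫ s in Set.Ioc (0:ℝ) (2*C), (1 - (μ {ω | ξ t ω ≤ s - C}).toReal))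
      atTop
      (nhds (∫ s in Set.Ioc (0:ℝ) (2*C), (1 - (μ {ω | ξlim ω ≤ s - C}).toReal))) := by
    apply tendsto_integral_of_dominated_convergence (fun _ => (1:ℝ))
    · exact fun t => ((hmono (ξ t)).aestronglyMeasurable)
    · exact integrableOn_const measure_Ioc_lt_top.ne
    · exact fun t => Eventually.of_forall fun s => hboundle (ξ t) s
    · exact Eventually.of_forall fun s => tendsto_const_nhds.sub (hconv (s - C))
  have key : ∀ t, (∫ ω, ξ t ω ∂μ) + C
      = ∫ s in Set.Ioc (0:ℝ) (2*C), (1 - (μ {ω | ξ t ω ≤ s - C}).toReal) :=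
    fun t => mean_repr μ (hmeas t) hC (hbdd t)
  have keylim := mean_repr μ hmeaslim hC hlimbdd
  have h2 : Tendsto (fun t => (∫ ω, ξ t ω ∂μ) + C) atTop (nhds ((∫ ω, ξlim ω ∂μ) + C)) := by
    rw [keylim, funext key]
    exact hdct
  have h3 := h2.sub (tendsto_const_nhds (x := C) (f := atTop))
  simpa using h3

/-- For independent, uniformly bounded real random variables `ξ t` converging in
distribution to `ξlim` (pointwise convergence of CDFs), and `α ∈ (0,1)`, the expectation of the
exponential moving average statistic `E_t = (1-α) ∑_{i=1}^t α^(t-i) ξ_i` converges to `E[ξlim]`. -/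
theorem ema_expectation_tendsto
    {Ω : Type*} [MeasurableSpace Ω] (μ : Measure Ω) [IsProbabilityMeasure μ]
    (ξ : ℕ → Ω → ℝ) (ξlim : Ω → ℝ)
    (hmeas : ∀ t, Measurable (ξ t)) (hmeaslim : Measurable ξlim)
    (C : ℝ) (hC : 0 < C)
    (hbdd : ∀ t, ∀ᵐ ω ∂μ, |ξ t ω| ≤ C)
    (hindep : iIndepFun ξ μ)
    (hconv : ∀ ε : ℝ, Tendsto (fun t => (μ {ω | ξ t ω ≤ ε}).toReal) atTop
      (nhds ((μ {ω | ξlim ω ≤ ε}).toReal)))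
    (α : ℝ) (hα : α ∈ Set.Ioo (0 : ℝ) 1) :
    Tendsto (fun t => μ[fun ω => (1 - α) * ∑ i ∈ Finset.Icc 1 t, α ^ (t - i) * ξ i ω])
      atTop (nhds (μ[ξlim])) := by
  obtain ⟨hα0, hα1⟩ := hα
  have hlimbdd : ∀ᵐ ω ∂μ, |ξlim ω| ≤ C := lim_bdd μ ξ ξlim hmeas hmeaslim C hC hbdd hconv
  have hint : ∀ t, Integrable (ξ t) μ := fun t =>
    (integrable_const C).mono' (hmeas t).aestronglyMeasurable
      (by simpa [Real.norm_eq_abs] using hbdd t)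
  have hintlim : Integrable ξlim μ :=
    (integrable_const C).mono' hmeaslim.aestronglyMeasurable
      (by simpa [Real.norm_eq_abs] using hlimbdd)
  -- bounds on means
  have habs : ∀ (f : Ω → ℝ), Integrable f μ → (∀ᵐ ω ∂μ, |f ω| ≤ C) → |∫ ω, f ω ∂μ| ≤ C := by
    intro f hf hb
    calc |∫ ω, f ω ∂μ| ≤ ∫ ω, |f ω| ∂μ := by
          simpa [Real.norm_eq_abs] using norm_integral_le_integral_norm (μ := μ) f
      _ ≤ ∫ _ω, C ∂μ := integral_mono_ae hf.abs (integrable_const C) hb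
      _ = C := by simp
  have hA : ∀ t, |∫ ω, ξ t ω ∂μ| ≤ C := fun t => habs _ (hint t) (hbdd t)
  have hAL : |∫ ω, ξlim ω ∂μ| ≤ C := habs _ hintlim hlimbdd
  -- convergence of means
  have hmean := mean_tendsto μ ξ ξlim hmeas hmeaslim C hC hbdd hlimbdd hconv
  have hb : Tendsto (fun i => (∫ ω, ξ i ω ∂μ) - ∫ ω, ξlim ω ∂μ) atTop (nhds 0) := by
    simpa using hmean.sub (tendsto_const_nhds (x := ∫ ω, ξlim ω ∂μ) (f := atTop))
  have hg := tendsto_ema_aux hα0 hα1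
    (b := fun i => (∫ ω, ξ i ω ∂μ) - ∫ ω, ξlim ω ∂μ) (M := 2 * C)
    (fun i => (abs_sub _ _).trans (by linarith [hA i, hAL])) hb
  -- geometric weight identity
  have hsum_eq : ∀ t : ℕ, (1 - α) * ∑ i ∈ Finset.Icc 1 t, α ^ (t - i) = 1 - α ^ t := by
    intro t
    have hre : ∑ i ∈ Finset.Icc 1 t, α ^ (t - i) = ∑ j ∈ Finset.range t, α ^ j := by
      rw [← Finset.Ico_add_one_right_eq_Icc, Finset.sum_Ico_eq_sum_range]
      calc ∑ i ∈ Finset.range t, α ^ (t - (1 + i))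
          = ∑ i ∈ Finset.range t, α ^ (t - 1 - i) := by
            apply Finset.sum_congr rfl
            intro i _
            congr 1
            omega
        _ = ∑ j ∈ Finset.range t, α ^ j := by
            have := Finset.sum_range_reflect (fun j => α ^ j) t
            simpa using this
    rw [hre, geom_sum_eq hα1.ne t]
    have : α - 1 ≠ 0 := by intro h; apply hα1.ne; linarith
    field_simp
    ring
  -- expectation of the EMA
  have hEeq : ∀ t : ℕ, μ[fun ω => (1 - α) * ∑ i ∈ Finset.Icc 1 t, α ^ (t - i) * ξ i ω]
      = (1 - α) * ∑ i ∈ Finset.Icc 1 t, α ^ (t - i) * ∫ ω, ξ i ω ∂μ := by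
    intro t
    rw [integral_const_mul]
    congr 1
    rw [integral_finset_sum _ (fun i _ => ((hint i).const_mul _))]
    exact Finset.sum_congr rfl fun i _ => integral_const_mul _ _
  -- decomposition
  have hdecomp : ∀ t : ℕ, (1 - α) * ∑ i ∈ Finset.Icc 1 t, α ^ (t - i) * ∫ ω, ξ i ω ∂μ
      = (1 - α) * (∑ i ∈ Finset.Icc 1 t,
          α ^ (t - i) * ((∫ ω, ξ i ω ∂μ) - ∫ ω, ξlim ω ∂μ))
        + (1 - α ^ t) * ∫ ω, ξlim ω ∂μ := by
    intro t
    rw [← hsum_eq t]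
    have : ∑ i ∈ Finset.Icc 1 t, α ^ (t - i) * ∫ ω, ξ i ω ∂μ
        = ∑ i ∈ Finset.Icc 1 t, (α ^ (t - i) * ((∫ ω, ξ i ω ∂μ) - ∫ ω, ξlim ω ∂μ)
            + α ^ (t - i) * ∫ ω, ξlim ω ∂μ) := by
      apply Finset.sum_congr rfl
      intro i _
      ring
    rw [this, Finset.sum_add_distrib, ← Finset.sum_mul]
    ring
  -- final limit
  have hfin : Tendsto (fun t => (1 - α) * (∑ i ∈ Finset.Icc 1 t,
        α ^ (t - i) * ((∫ ω, ξ i ω ∂μ) - ∫ ω, ξlim ω ∂μ))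
        + (1 - α ^ t) * ∫ ω, ξlim ω ∂μ) atTop (nhds (μ[ξlim])) := by
    have h1 : Tendsto (fun t : ℕ => (1:ℝ) - α ^ t) atTop (nhds 1) := by
      simpa using (tendsto_const_nhds (x := (1:ℝ)) (f := atTop)).sub
        (tendsto_pow_atTop_nhds_zero_of_lt_one hα0.le hα1)
    have h2 := ((tendsto_const_nhds (x := 1 - α) (f := atTop)).mul hg).add
      (h1.mul (tendsto_const_nhds (x := ∫ ω, ξlim ω ∂μ)))
    rw [show (1 - α) * 0 + 1 * ∫ ω, ξlim ω ∂μ = ∫ ω, ξlim ω ∂μ by ring] at h2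
    exact h2
  exact Tendsto.congr (fun t => ((hEeq t).trans (hdecomp t)).symm) hfin
end

section
/- Let (ξ_t)_{t≥1} be a sequence of independent real-valued random variables that are uniformly bounded (there exists C > 0 with |ξ_t| ≤ C almost surely for every t), and suppose ξ_t converges in distribution to a random variable ξ, i.e. for every ε ∈ ℝ, lim_{t→∞} P(ξ_t ≤ ε) = P(ξ ≤ ε). Fix α ∈ (0,1). Then the variance of the exponential moving average statistic satisfies lim_{t→∞} Var(E_t) = ((1−α)/(1+α))·Var(ξ); equivalently, Var(E_t) = ((1−α^{2t})(1−α)/(1+α))·Var(ξ) + o(1) as t → ∞. -/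
open MeasureTheory ProbabilityTheory Filter Set

lemma toReal_prob_le_one {Ω : Type*} [MeasurableSpace Ω] {μ : Measure Ω}
    [IsProbabilityMeasure μ] (s : Set Ω) : (μ s).toReal ≤ 1 := by
  have h := ENNReal.toReal_mono ENNReal.one_ne_top (prob_le_one (μ := μ) (s := s))
  simpa using h

lemma my_layer {Ω : Type*} [MeasurableSpace Ω] (μ : Measure Ω) [IsProbabilityMeasure μ]
    {f : Ω → ℝ} {M : ℝ} (hf : Measurable f) (hnn : 0 ≤ᵐ[μ] f)
    (hb : ∀ᵐ ω ∂μ, f ω ≤ M) :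
    ∫ ω, f ω ∂μ = ∫ t in Set.Ioc 0 M, (1 - (μ {ω | f ω ≤ t}).toReal) := by
  have hint : Integrable f μ := by
    refine memLp_one_iff_integrable.mp
      (memLp_of_bounded (a := 0) (b := M) ?_ hf.aestronglyMeasurable 1)
    filter_upwards [hnn, hb] with ω h1 h2 using ⟨h1, h2⟩
  rw [hint.integral_eq_integral_meas_lt hnn]
  rw [setIntegral_eq_of_subset_of_ae_diff_eq_zero measurableSet_Ioi.nullMeasurableSet
    Set.Ioc_subset_Ioi_self ?hz]
  case hz =>
    refine Eventually.of_forall fun t ht => ?_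
    simp only [Set.mem_diff, Set.mem_Ioi, Set.mem_Ioc, not_and, not_le] at ht
    have htM : M < t := ht.2 ht.1
    have obs : μ {a | t < f a} = 0 := by
      rw [measure_eq_zero_iff_ae_notMem]
      filter_upwards [hb] with a ha
      simp only [Set.mem_setOf_eq, not_lt]
      exact ha.trans htM.le
    simp [measureReal_def, obs]
  refine setIntegral_congr_fun measurableSet_Ioc fun t _ => ?_
  have hset : {a | t < f a} = {ω | f ω ≤ t}ᶜ := by ext ω; simp [not_le]
  rw [hset, measureReal_def, measure_compl (s := {ω | f ω ≤ t}) (hf measurableSet_Iic)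
    (measure_ne_top μ _)]
  rw [measure_univ, ENNReal.toReal_sub_of_le prob_le_one ENNReal.one_ne_top]
  simp

lemma tendsto_integral_of_cdf {Ω : Type*} [MeasurableSpace Ω] (μ : Measure Ω)
    [IsProbabilityMeasure μ]
    (g : ℕ → Ω → ℝ) (glim : Ω → ℝ) (hm : ∀ n, Measurable (g n)) (hml : Measurable glim)
    (M : ℝ)
    (hnn : ∀ n, 0 ≤ᵐ[μ] g n) (hb : ∀ n, ∀ᵐ ω ∂μ, g n ω ≤ M)
    (hnnl : 0 ≤ᵐ[μ] glim) (hbl : ∀ᵐ ω ∂μ, glim ω ≤ M)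
    (hcdf : ∀ t : ℝ, Tendsto (fun n => (μ {ω | g n ω ≤ t}).toReal) atTop
      (nhds ((μ {ω | glim ω ≤ t}).toReal))) :
    Tendsto (fun n => ∫ ω, g n ω ∂μ) atTop (nhds (∫ ω, glim ω ∂μ)) := by
  have h1 : ∀ n, ∫ ω, g n ω ∂μ
      = ∫ t in Set.Ioc 0 M, (1 - (μ {ω | g n ω ≤ t}).toReal) :=
    fun n => my_layer μ (hm n) (hnn n) (hb n)
  rw [my_layer μ hml hnnl hbl, funext h1]
  have hmono : ∀ (f : Ω → ℝ), Monotone (fun t : ℝ => (μ {ω | f ω ≤ t}).toReal) := by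
    intro f s t hst
    exact ENNReal.toReal_mono (measure_ne_top μ _)
      (measure_mono fun ω hω => le_trans hω hst)
  refine tendsto_integral_of_dominated_convergence (fun _ => 1) ?_ ?_ ?_ ?_
  · intro n
    exact (measurable_const.sub (hmono (g n)).measurable).aestronglyMeasurable
  · exact integrableOn_const measure_Ioc_lt_top.ne
  · intro n
    refine Eventually.of_forall fun t => ?_
    have h1' := toReal_prob_le_one (μ := μ) {ω | g n ω ≤ t}
    have h2 : (0:ℝ) ≤ (μ {ω | g n ω ≤ t}).toReal := ENNReal.toReal_nonneg
    rw [Real.norm_eq_abs, abs_le]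
    constructor <;> · linarith
  · exact Eventually.of_forall fun t => tendsto_const_nhds.sub (hcdf t)

lemma sum_Ioc_geom_reindex (f : ℕ → ℝ) (t : ℕ) :
    ∑ i ∈ Finset.Ioc 0 t, f (t - i) = ∑ j ∈ Finset.range t, f j := by
  refine Finset.sum_nbij' (fun i => t - i) (fun j => t - j) ?_ ?_ ?_ ?_ ?_
  · intro a ha
    simp only [Finset.mem_Ioc] at ha
    simp only [Finset.mem_range]
    omega
  · intro a ha
    simp only [Finset.mem_range] at ha
    simp only [Finset.mem_Ioc]
    omega
  · intro a ha; simp only [Finset.mem_Ioc] at ha; omega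
  · intro a ha; simp only [Finset.mem_range] at ha; omega
  · intro a ha; rfl

lemma geom_sum_le_inv_one_sub {r : ℝ} (hr0 : 0 ≤ r) (hr1 : r < 1) (t : ℕ) :
    ∑ j ∈ Finset.range t, r ^ j ≤ (1 - r)⁻¹ := by
  rw [geom_sum_eq hr1.ne t, div_le_iff_of_neg (by linarith : r - 1 < 0)]
  have hne : (1:ℝ) - r ≠ 0 := sub_ne_zero.mpr hr1.ne'
  have h : (1 - r)⁻¹ * (r - 1) = -1 := by
    rw [inv_mul_eq_div, div_eq_iff hne]; ring
  rw [h]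
  nlinarith [pow_nonneg hr0 t]

lemma geom_avg_tendsto_zero {r : ℝ} (hr0 : 0 < r) (hr1 : r < 1) {a : ℕ → ℝ}
    (ha : Tendsto a atTop (nhds 0)) :
    Tendsto (fun t => ∑ i ∈ Finset.Ioc 0 t, r ^ (t - i) * a i) atTop (nhds 0) := by
  set b : ℕ → ℝ := fun i => |a i| with hb_def
  have hb : Tendsto b atTop (nhds 0) := by simpa using ha.abs
  have hbnn : ∀ i, 0 ≤ b i := fun i => abs_nonneg _
  -- bound the norm by the sum with |a|
  have hbound : ∀ t, ‖∑ i ∈ Finset.Ioc 0 t, r ^ (t - i) * a i‖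
      ≤ ∑ i ∈ Finset.Ioc 0 t, r ^ (t - i) * b i := by
    intro t
    calc ‖∑ i ∈ Finset.Ioc 0 t, r ^ (t - i) * a i‖
        ≤ ∑ i ∈ Finset.Ioc 0 t, ‖r ^ (t - i) * a i‖ := norm_sum_le _ _
      _ = ∑ i ∈ Finset.Ioc 0 t, r ^ (t - i) * b i := by
          refine Finset.sum_congr rfl fun i _ => ?_
          rw [Real.norm_eq_abs, abs_mul, abs_pow, abs_of_nonneg hr0.le]
  refine squeeze_zero_norm hbound ?_
  -- now the nonneg version
  obtain ⟨K, hK⟩ := hb.bddAbove_range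
  have hK' : ∀ i, b i ≤ K := fun i => hK (Set.mem_range_self i)
  have hK0 : 0 ≤ K := le_trans (hbnn 0) (hK' 0)
  rw [Metric.tendsto_atTop]
  intro ε hε
  have hε4 : 0 < ε * (1 - r) / 4 :=
    div_pos (mul_pos hε (by linarith)) (by norm_num)
  obtain ⟨N₁, hN₁⟩ := Metric.tendsto_atTop.mp hb (ε * (1 - r) / 4) hε4
  have hgeo : Tendsto (fun m => r ^ m * ((N₁ : ℝ) * K + 1)) atTop (nhds 0) := by
    simpa using (tendsto_pow_atTop_nhds_zero_of_lt_one hr0.le hr1).mul_const ((N₁ : ℝ) * K + 1)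
  obtain ⟨N₂, hN₂⟩ := Metric.tendsto_atTop.mp hgeo (ε / 2) (by linarith)
  refine ⟨N₁ + N₂, fun t ht => ?_⟩
  have htN₁ : N₁ ≤ t := le_trans (Nat.le_add_right _ _) ht
  have hsplit : ∑ i ∈ Finset.Ioc 0 N₁, r ^ (t - i) * b i
      + ∑ i ∈ Finset.Ioc N₁ t, r ^ (t - i) * b i
      = ∑ i ∈ Finset.Ioc 0 t, r ^ (t - i) * b i :=
    Finset.sum_Ioc_consecutive _ (Nat.zero_le _) htN₁
  have hterm_nn : ∀ i, 0 ≤ r ^ (t - i) * b i :=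
    fun i => mul_nonneg (pow_nonneg hr0.le _) (hbnn i)
  -- chunk 1
  have hchunk1 : ∑ i ∈ Finset.Ioc 0 N₁, r ^ (t - i) * b i ≤ r ^ (t - N₁) * ((N₁:ℝ) * K + 1) := by
    have : ∀ i ∈ Finset.Ioc 0 N₁, r ^ (t - i) * b i ≤ r ^ (t - N₁) * K := by
      intro i hi
      simp only [Finset.mem_Ioc] at hi
      have h1 : r ^ (t - i) ≤ r ^ (t - N₁) :=
        pow_le_pow_of_le_one hr0.le hr1.le (by omega)
      exact mul_le_mul h1 (hK' i) (hbnn i) (pow_nonneg hr0.le _)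
    calc ∑ i ∈ Finset.Ioc 0 N₁, r ^ (t - i) * b i
        ≤ ∑ _i ∈ Finset.Ioc 0 N₁, r ^ (t - N₁) * K := Finset.sum_le_sum this
      _ = (N₁ : ℝ) * (r ^ (t - N₁) * K) := by
          rw [Finset.sum_const, Nat.card_Ioc, Nat.sub_zero, nsmul_eq_mul]
      _ ≤ r ^ (t - N₁) * ((N₁:ℝ) * K + 1) := by
          have h0 : (0:ℝ) ≤ r ^ (t - N₁) := pow_nonneg hr0.le _
          nlinarith
  have hchunk1' : r ^ (t - N₁) * ((N₁:ℝ) * K + 1) < ε / 2 := by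
    have := hN₂ (t - N₁) (by omega)
    rw [Real.dist_eq, sub_zero, abs_of_nonneg (by positivity)] at this
    exact this
  -- chunk 2
  have hchunk2 : ∑ i ∈ Finset.Ioc N₁ t, r ^ (t - i) * b i ≤ ε * (1 - r) / 4 * (1 - r)⁻¹ := by
    calc ∑ i ∈ Finset.Ioc N₁ t, r ^ (t - i) * b i
        ≤ ∑ i ∈ Finset.Ioc N₁ t, r ^ (t - i) * (ε * (1 - r) / 4) := by
          refine Finset.sum_le_sum fun i hi => ?_
          simp only [Finset.mem_Ioc] at hi
          have := hN₁ i (le_of_lt hi.1)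
          rw [Real.dist_eq, sub_zero, abs_of_nonneg (hbnn i)] at this
          exact mul_le_mul_of_nonneg_left this.le (pow_nonneg hr0.le _)
      _ = (∑ i ∈ Finset.Ioc N₁ t, r ^ (t - i)) * (ε * (1 - r) / 4) := by
          rw [Finset.sum_mul]
      _ ≤ (1 - r)⁻¹ * (ε * (1 - r) / 4) := by
          refine mul_le_mul_of_nonneg_right ?_ (by positivity)
          calc ∑ i ∈ Finset.Ioc N₁ t, r ^ (t - i)
              ≤ ∑ i ∈ Finset.Ioc 0 t, r ^ (t - i) :=
                Finset.sum_le_sum_of_subset_of_nonneg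
                  (Finset.Ioc_subset_Ioc (Nat.zero_le _) le_rfl)
                  (fun i _ _ => pow_nonneg hr0.le _)
            _ = ∑ j ∈ Finset.range t, r ^ j := sum_Ioc_geom_reindex (fun j => r ^ j) t
            _ ≤ (1 - r)⁻¹ := geom_sum_le_inv_one_sub hr0.le hr1 t
      _ = ε * (1 - r) / 4 * (1 - r)⁻¹ := by ring
  have hchunk2' : ε * (1 - r) / 4 * (1 - r)⁻¹ = ε / 4 := by
    have hne : (1:ℝ) - r ≠ 0 := sub_ne_zero.mpr hr1.ne'
    field_simp
  rw [Real.dist_eq, sub_zero, abs_of_nonneg (Finset.sum_nonneg fun i _ => hterm_nn i)]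
  rw [← hsplit]
  linarith [hchunk1, hchunk1', hchunk2, hchunk2'.le]

lemma geom_avg_tendsto {r : ℝ} (hr0 : 0 < r) (hr1 : r < 1) {a : ℕ → ℝ} {L : ℝ}
    (ha : Tendsto a atTop (nhds L)) :
    Tendsto (fun t => ∑ i ∈ Finset.Ioc 0 t, r ^ (t - i) * a i) atTop (nhds (L / (1 - r))) := by
  have h0 : Tendsto (fun i => a i - L) atTop (nhds 0) := by
    simpa using ha.sub_const L
  have h1 := geom_avg_tendsto_zero hr0 hr1 h0
  have h2 : Tendsto (fun t => L * ∑ j ∈ Finset.range t, r ^ j) atTop (nhds (L * (1 - r)⁻¹)) :=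
    ((hasSum_geometric_of_lt_one hr0.le hr1).tendsto_sum_nat).const_mul L
  have h3 := h1.add h2
  rw [zero_add] at h3
  have hfun : (fun t => ∑ i ∈ Finset.Ioc 0 t, r ^ (t - i) * a i)
      = fun t => (∑ i ∈ Finset.Ioc 0 t, r ^ (t - i) * (a i - L))
        + L * ∑ j ∈ Finset.range t, r ^ j := by
    funext t
    rw [← sum_Ioc_geom_reindex (fun j => r ^ j) t, Finset.mul_sum, ← Finset.sum_add_distrib]
    exact Finset.sum_congr rfl fun i _ => by ring
  rw [hfun, div_eq_mul_inv]
  exact h3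

lemma variance_add_const' {Ω : Type*} [MeasurableSpace Ω] {μ : Measure Ω}
    [IsProbabilityMeasure μ] {X : Ω → ℝ} (hX : MemLp X 2 μ) (c : ℝ) :
    variance (fun ω => X ω + c) μ = variance X μ := by
  have hXc : MemLp (fun ω => X ω + c) 2 μ := hX.add (memLp_const c)
  rw [variance_eq_sub hXc, variance_eq_sub hX]
  have hint : Integrable X μ := hX.integrable one_le_two
  have hsq : Integrable (fun ω => X ω ^ 2) μ := hX.integrable_sq
  have e1 : μ[(fun ω => X ω + c) ^ 2] = μ[X ^ 2] + 2 * c * μ[X] + c ^ 2 := by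
    have hpt : ∀ ω, ((fun ω => X ω + c) ^ 2) ω = X ω ^ 2 + (2 * c) * X ω + c ^ 2 := by
      intro ω; simp only [Pi.pow_apply]; ring
    calc μ[(fun ω => X ω + c) ^ 2]
        = ∫ ω, (X ω ^ 2 + (2 * c) * X ω + c ^ 2) ∂μ := by
          exact integral_congr_ae (Eventually.of_forall hpt)
      _ = μ[X ^ 2] + 2 * c * μ[X] + c ^ 2 := by
          have hsum : Integrable (fun ω => X ω ^ 2 + 2 * c * X ω) μ :=
            hsq.add (hint.const_mul (2 * c))
          have hcm : Integrable (fun ω => 2 * c * X ω) μ := hint.const_mul (2 * c)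
          rw [integral_add hsum (integrable_const _),
            integral_add hsq hcm, integral_const_mul, integral_const]
          simp [Pi.pow_apply]
  have e2 : μ[fun ω => X ω + c] = μ[X] + c := by
    rw [integral_add hint (integrable_const c), integral_const]
    simp
  rw [e1, e2]
  ring

/-- For independent, uniformly bounded real random variables `ξ t` converging in
distribution to `ξlim`, and `α ∈ (0,1)`, the variance of the exponential moving average statistic
`E_t = (1-α) ∑_{i=1}^t α^(t-i) ξ_i` satisfies
`lim_{t→∞} Var(E_t) = ((1-α)/(1+α)) Var(ξlim)`; equivalently,
`Var(E_t) = ((1-α^(2t))(1-α)/(1+α)) Var(ξlim) + o(1)` as `t → ∞`. -/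
theorem ema_variance_tendsto
    {Ω : Type*} [MeasurableSpace Ω] (μ : Measure Ω) [IsProbabilityMeasure μ]
    (ξ : ℕ → Ω → ℝ) (ξlim : Ω → ℝ)
    (hmeas : ∀ t, Measurable (ξ t)) (hmeaslim : Measurable ξlim)
    (C : ℝ) (hC : 0 < C)
    (hbdd : ∀ t, ∀ᵐ ω ∂μ, |ξ t ω| ≤ C)
    (hindep : iIndepFun ξ μ)
    (hconv : ∀ ε : ℝ, Tendsto (fun t => (μ {ω | ξ t ω ≤ ε}).toReal) atTop
      (nhds ((μ {ω | ξlim ω ≤ ε}).toReal)))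
    (α : ℝ) (hα : α ∈ Set.Ioo (0 : ℝ) 1) :
    Tendsto (fun t => variance (fun ω => (1 - α) * ∑ i ∈ Finset.Icc 1 t, α ^ (t - i) * ξ i ω) μ)
      atTop (nhds ((1 - α) / (1 + α) * variance ξlim μ)) ∧
    Tendsto (fun t =>
        variance (fun ω => (1 - α) * ∑ i ∈ Finset.Icc 1 t, α ^ (t - i) * ξ i ω) μ
          - (1 - α ^ (2 * t)) * (1 - α) / (1 + α) * variance ξlim μ)
      atTop (nhds 0) := by
  obtain ⟨hα0, hα1⟩ := hα
  have hbd : ∀ t, ∀ᵐ ω ∂μ, ξ t ω ∈ Set.Icc (-C) C := by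
    intro t
    filter_upwards [hbdd t] with ω h
    exact ⟨(abs_le.mp h).1, (abs_le.mp h).2⟩
  -- ξlim is bounded a.e.
  have hlim_le : ∀ᵐ ω ∂μ, ξlim ω ≤ C := by
    have hone : ∀ t, (μ {ω | ξ t ω ≤ C}).toReal = 1 := by
      intro t
      have h0 : μ {ω | ξ t ω ≤ C}ᶜ = 0 := by
        rw [Set.compl_setOf]
        exact ae_iff.mp ((hbd t).mono fun ω h => h.2)
      rw [(prob_compl_eq_zero_iff (s := {ω | ξ t ω ≤ C}) (hmeas t measurableSet_Iic)).mp h0]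
      simp
    have hconst : Tendsto (fun _ : ℕ => (1 : ℝ)) atTop (nhds ((μ {ω | ξlim ω ≤ C}).toReal)) := by
      have := hconv C
      rwa [funext hone] at this
    have heq : (μ {ω | ξlim ω ≤ C}).toReal = 1 :=
      tendsto_nhds_unique hconst tendsto_const_nhds
    have hμ1 : μ {ω | ξlim ω ≤ C} = 1 := (ENNReal.toReal_eq_one_iff _).mp heq
    have h0 : μ {ω | ξlim ω ≤ C}ᶜ = 0 :=
      (prob_compl_eq_zero_iff (s := {ω | ξlim ω ≤ C}) (hmeaslim measurableSet_Iic)).mpr hμ1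
    rw [Set.compl_setOf] at h0
    exact ae_iff.mpr h0
  have hlim_ge : ∀ᵐ ω ∂μ, -C ≤ ξlim ω := by
    have hzero : ∀ n : ℕ, μ {ω | ξlim ω ≤ -C - ((n : ℝ) + 1)⁻¹} = 0 := by
      intro n
      have hinv : (0:ℝ) < ((n : ℝ) + 1)⁻¹ := by positivity
      have hz : ∀ t, (μ {ω | ξ t ω ≤ -C - ((n : ℝ) + 1)⁻¹}).toReal = 0 := by
        intro t
        have h0 : μ {ω | ξ t ω ≤ -C - ((n : ℝ) + 1)⁻¹} = 0 := by
          rw [measure_eq_zero_iff_ae_notMem]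
          filter_upwards [hbd t] with ω h
          simp only [Set.mem_setOf_eq, not_le]
          linarith [h.1]
        simp [h0]
      have hconst : Tendsto (fun _ : ℕ => (0 : ℝ)) atTop
          (nhds ((μ {ω | ξlim ω ≤ -C - ((n : ℝ) + 1)⁻¹}).toReal)) := by
        have := hconv (-C - ((n : ℝ) + 1)⁻¹)
        rwa [funext hz] at this
      have heq : (μ {ω | ξlim ω ≤ -C - ((n : ℝ) + 1)⁻¹}).toReal = 0 :=
        tendsto_nhds_unique hconst tendsto_const_nhds
      exact ((ENNReal.toReal_eq_zero_iff _).mp heq).resolve_right (measure_ne_top μ _)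
    have hae : ∀ᵐ ω ∂μ, ∀ n : ℕ, ω ∉ {ω | ξlim ω ≤ -C - ((n : ℝ) + 1)⁻¹} :=
      ae_all_iff.mpr fun n => measure_eq_zero_iff_ae_notMem.mp (hzero n)
    filter_upwards [hae] with ω h
    by_contra hc
    push_neg at hc
    obtain ⟨n, hn⟩ := exists_nat_one_div_lt (show (0:ℝ) < -C - ξlim ω by linarith)
    rw [one_div] at hn
    exact h n (show ξlim ω ≤ -C - ((n:ℝ) + 1)⁻¹ by linarith)
  -- first moment convergence
  have hm1 : Tendsto (fun t => ∫ ω, (ξ t ω + C) ∂μ) atTop (nhds (∫ ω, (ξlim ω + C) ∂μ)) := by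
    refine tendsto_integral_of_cdf μ (fun t ω => ξ t ω + C) (fun ω => ξlim ω + C)
      (fun t => (hmeas t).add_const C) (hmeaslim.add_const C) (2 * C)
      (fun t => ?_) (fun t => ?_) ?_ ?_ ?_
    · filter_upwards [hbd t] with ω h; simp only [Pi.zero_apply]; linarith [h.1]
    · filter_upwards [hbd t] with ω h; linarith [h.2]
    · filter_upwards [hlim_ge] with ω h; simp only [Pi.zero_apply]; linarith
    · filter_upwards [hlim_le] with ω h; linarith
    · intro s
      have hsetC : ∀ (f : Ω → ℝ), {ω | f ω + C ≤ s} = {ω | f ω ≤ s - C} := by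
        intro f; ext ω; simp only [Set.mem_setOf_eq]
        constructor <;> intro h <;> linarith
      simp only [hsetC]
      exact hconv (s - C)
  -- second moment convergence
  have hm2 : Tendsto (fun t => ∫ ω, (ξ t ω + C) ^ 2 ∂μ) atTop
      (nhds (∫ ω, (ξlim ω + C) ^ 2 ∂μ)) := by
    refine tendsto_integral_of_cdf μ (fun t ω => (ξ t ω + C) ^ 2) (fun ω => (ξlim ω + C) ^ 2)
      (fun t => ((hmeas t).add_const C).pow_const 2) ((hmeaslim.add_const C).pow_const 2)
      ((2 * C) ^ 2)
      (fun t => Eventually.of_forall fun ω => sq_nonneg _) (fun t => ?_)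
      (Eventually.of_forall fun ω => sq_nonneg _) ?_ ?_
    · filter_upwards [hbd t] with ω h
      exact sq_le_sq' (by linarith [h.1, hC]) (by linarith [h.2, hC])
    · filter_upwards [hlim_ge, hlim_le] with ω h1 h2
      exact sq_le_sq' (by linarith) (by linarith)
    · intro s
      rcases lt_or_ge s 0 with hs | hs
      · have he : ∀ f : Ω → ℝ, {ω | (f ω + C) ^ 2 ≤ s} = (∅ : Set Ω) := by
          intro f
          refine Set.eq_empty_of_forall_notMem fun ω h => ?_
          simp only [Set.mem_setOf_eq] at h
          nlinarith [sq_nonneg (f ω + C)]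
        have h0 : ∀ n : ℕ, (μ {ω | (ξ n ω + C) ^ 2 ≤ s}).toReal = 0 := by
          intro n; rw [he (ξ n)]; simp
        rw [funext h0, he ξlim]
        simpa using tendsto_const_nhds
      · have hkey : ∀ (f : Ω → ℝ), (∀ᵐ ω ∂μ, -C ≤ f ω) →
            μ {ω | (f ω + C) ^ 2 ≤ s} = μ {ω | f ω ≤ Real.sqrt s - C} := by
          intro f hf
          refine measure_congr ?_
          rw [Filter.eventuallyEq_set]
          filter_upwards [hf] with ω h
          show (f ω + C) ^ 2 ≤ s ↔ f ω ≤ Real.sqrt s - C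
          rw [← Real.le_sqrt (by linarith) hs]
          constructor <;> intro <;> linarith
        have h1 : ∀ n, (μ {ω | (ξ n ω + C) ^ 2 ≤ s}).toReal
            = (μ {ω | ξ n ω ≤ Real.sqrt s - C}).toReal := by
          intro n
          rw [hkey (ξ n) ((hbd n).mono fun ω h => h.1)]
        rw [funext h1, hkey ξlim hlim_ge]
        exact hconv (Real.sqrt s - C)
  -- L² facts
  have hL2 : ∀ t, MemLp (ξ t) 2 μ :=
    fun t => memLp_of_bounded (hbd t) (hmeas t).aestronglyMeasurable 2
  have hL2lim : MemLp ξlim 2 μ := by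
    refine memLp_of_bounded (a := -C) (b := C) ?_ hmeaslim.aestronglyMeasurable 2
    filter_upwards [hlim_ge, hlim_le] with ω h1 h2 using ⟨h1, h2⟩
  -- variance convergence
  have hvt : ∀ t, variance (ξ t) μ
      = (∫ ω, (ξ t ω + C) ^ 2 ∂μ) - (∫ ω, (ξ t ω + C) ∂μ) ^ 2 := by
    intro t
    have hXc : MemLp (fun ω => ξ t ω + C) 2 μ := (hL2 t).add (memLp_const C)
    rw [← variance_add_const' (hL2 t) C, variance_eq_sub hXc]
    simp only [Pi.pow_apply]
  have hvlim : variance ξlim μ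
      = (∫ ω, (ξlim ω + C) ^ 2 ∂μ) - (∫ ω, (ξlim ω + C) ∂μ) ^ 2 := by
    have hXc : MemLp (fun ω => ξlim ω + C) 2 μ := hL2lim.add (memLp_const C)
    rw [← variance_add_const' hL2lim C, variance_eq_sub hXc]
    simp only [Pi.pow_apply]
  have hv : Tendsto (fun t => variance (ξ t) μ) atTop (nhds (variance ξlim μ)) := by
    rw [funext hvt, hvlim]
    exact hm2.sub (hm1.pow 2)
  -- variance of the EMA statistic
  have hpairs : ∀ t, variance (fun ω => (1 - α) * ∑ i ∈ Finset.Icc 1 t, α ^ (t - i) * ξ i ω) μ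
      = (1 - α) ^ 2 * ∑ i ∈ Finset.Ioc 0 t, (α ^ 2) ^ (t - i) * variance (ξ i) μ := by
    intro t
    rw [variance_const_mul]
    congr 1
    have hfs : (fun ω => ∑ i ∈ Finset.Icc 1 t, α ^ (t - i) * ξ i ω)
        = ∑ i ∈ Finset.Icc 1 t, (fun ω => α ^ (t - i) * ξ i ω) := by
      funext ω; rw [Finset.sum_apply]
    rw [hfs, IndepFun.variance_sum (fun i _ => (hL2 i).const_mul _)
      (fun i _ j _ hij => (hindep.indepFun hij).comp
        (measurable_id.const_mul (α ^ (t - i))) (measurable_id.const_mul (α ^ (t - j))))]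
    refine Finset.sum_congr (Finset.Icc_add_one_left_eq_Ioc 0 t) fun i _ => ?_
    rw [variance_const_mul, pow_right_comm]
  have hα2pos : (0:ℝ) < α ^ 2 := by positivity
  have hα2lt : α ^ 2 < 1 := pow_lt_one₀ hα0.le hα1 two_ne_zero
  have hmain := geom_avg_tendsto hα2pos hα2lt hv
  have h1 := hmain.const_mul ((1 - α) ^ 2)
  have hne1 : (1:ℝ) - α ≠ 0 := sub_ne_zero.mpr hα1.ne'
  have hne2 : (1:ℝ) + α ≠ 0 := by positivity
  have hconst : (1 - α) ^ 2 * (variance ξlim μ / (1 - α ^ 2))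
      = (1 - α) / (1 + α) * variance ξlim μ := by
    have h3 : (1:ℝ) - α ^ 2 = (1 - α) * (1 + α) := by ring
    rw [h3]
    field_simp
  have first : Tendsto
      (fun t => variance (fun ω => (1 - α) * ∑ i ∈ Finset.Icc 1 t, α ^ (t - i) * ξ i ω) μ)
      atTop (nhds ((1 - α) / (1 + α) * variance ξlim μ)) := by
    rw [funext hpairs, ← hconst]
    exact h1
  refine ⟨first, ?_⟩
  have hpow : Tendsto (fun t : ℕ => α ^ (2 * t)) atTop (nhds 0) := by
    have := tendsto_pow_atTop_nhds_zero_of_lt_one hα2pos.le hα2lt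
    simpa [pow_mul] using this
  have h2' : Tendsto (fun t : ℕ => (1 - α ^ (2 * t)) * (1 - α) / (1 + α) * variance ξlim μ)
      atTop (nhds ((1 - α) / (1 + α) * variance ξlim μ)) := by
    have hsub : Tendsto (fun t : ℕ => 1 - α ^ (2 * t)) atTop (nhds (1 - 0)) :=
      Tendsto.sub tendsto_const_nhds hpow
    have h := hsub.mul_const ((1 - α) / (1 + α) * variance ξlim μ)
    have hfe : (fun t : ℕ => (1 - α ^ (2 * t)) * ((1 - α) / (1 + α) * variance ξlim μ))
        = fun t : ℕ => (1 - α ^ (2 * t)) * (1 - α) / (1 + α) * variance ξlim μ := by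
      funext t; ring
    rw [hfe] at h
    simpa using h
  have := first.sub h2'
  simpa using this
end

section
/- Let X and Y be real-valued random variables with |X| ≤ C and |Y| ≤ C almost surely, for some constant C > 0. Then |E[X²] − E[Y²]| ≤ 4C² · sup_{λ ∈ ℝ} |P(X ≤ λ) − P(Y ≤ λ)|. -/
open MeasureTheory ProbabilityTheory Filter

lemma volume_Ioc_finite (C : ℝ) :
    IsFiniteMeasure (MeasureTheory.volume.restrict (Set.Ioc (-C) C)) := by
  constructor
  rw [Measure.restrict_apply_univ, Real.volume_Ioc]
  exact ENNReal.ofReal_lt_top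

lemma key_sq_eq {Ω : Type*} [MeasurableSpace Ω] (μ : Measure Ω) [IsProbabilityMeasure μ]
    (X : Ω → ℝ) (hX : Measurable X) (C : ℝ) (hC : 0 < C)
    (hXbdd : ∀ᵐ ω ∂μ, |X ω| ≤ C) :
    ∫ ω, X ω ^ 2 ∂μ
      = C ^ 2 - ∫ lam in Set.Ioc (-C) C, 2 * lam * (μ {ω | X ω ≤ lam}).toReal := by
  haveI := volume_Ioc_finite C
  set π := μ.prod (MeasureTheory.volume.restrict (Set.Ioc (-C) C)) with hπ
  set F : Ω → ℝ → ℝ := fun ω lam => if X ω ≤ lam then 2 * lam else 0 with hF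
  have hS : MeasurableSet {p : Ω × ℝ | X p.1 ≤ p.2} :=
    measurableSet_le (hX.comp measurable_fst) measurable_snd
  have hfm : Measurable (Function.uncurry F) := by
    have : Function.uncurry F =
        Set.indicator {p : Ω × ℝ | X p.1 ≤ p.2} (fun p => 2 * p.2) := by
      ext p
      simp [Function.uncurry, hF, Set.indicator_apply, Set.mem_setOf_eq]
    rw [this]
    exact (measurable_const.mul measurable_snd).indicator hS
  have h2 : ∀ᵐ p ∂π, p.2 ∈ Set.Ioc (-C) C := by
    rw [ae_iff]
    have : {p : Ω × ℝ | ¬ p.2 ∈ Set.Ioc (-C) C} = Set.univ ×ˢ (Set.Ioc (-C) C)ᶜ := by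
      ext p; simp
    rw [this, hπ, Measure.prod_prod, Measure.restrict_apply measurableSet_Ioc.compl]
    simp
  have hfi : Integrable (Function.uncurry F) π := by
    refine ⟨hfm.aestronglyMeasurable, HasFiniteIntegral.of_bounded (C := 2 * C) ?_⟩
    filter_upwards [h2] with p hp
    have h1 : |p.2| ≤ C := abs_le.2 ⟨le_of_lt hp.1, hp.2⟩
    simp only [Function.uncurry, hF]
    have hb : ‖Function.uncurry F p‖ ≤ 2 * |p.2| := by
      simp only [Function.uncurry, hF]
      split
      · rw [Real.norm_eq_abs, abs_mul, abs_two]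
      · rw [norm_zero]; positivity
    exact hb.trans (by nlinarith)
  have hswap := integral_integral_swap hfi
  -- inner integral over lam
  have inner1 : ∀ x : ℝ, |x| ≤ C →
      (∫ lam in Set.Ioc (-C) C, (if x ≤ lam then 2 * lam else 0)) = C ^ 2 - x ^ 2 := by
    intro x hx
    obtain ⟨hx1, hx2⟩ := abs_le.1 hx
    have heq : (fun lam : ℝ => if x ≤ lam then 2 * lam else 0)
        = (Set.Ici x).indicator (fun lam => 2 * lam) := by
      ext lam; simp [Set.indicator_apply]
    rw [heq, setIntegral_indicator measurableSet_Ici]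
    have hset : (Set.Ioc (-C) C ∩ Set.Ici x : Set ℝ) =ᵐ[MeasureTheory.volume] Set.Ioc x C := by
      rw [MeasureTheory.ae_eq_set]
      constructor
      · refine measure_mono_null (fun lam hlam => ?_) (Real.volume_singleton (a := x))
        obtain ⟨⟨⟨hA1, hA2⟩, hA3⟩, hB⟩ := hlam
        simp only [Set.mem_Ioc, not_and, not_le] at hB
        simp only [Set.mem_singleton_iff]
        rcases eq_or_lt_of_le (Set.mem_Ici.mp hA3) with h | h
        · exact h.symm
        · exact absurd hA2 (not_le.2 (hB h))
      · refine measure_mono_null (fun lam hlam => ?_)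
          (measure_empty (μ := (MeasureTheory.volume : Measure ℝ)))
        obtain ⟨⟨h1, h2⟩, h3⟩ := hlam
        exact absurd ⟨⟨lt_of_le_of_lt hx1 h1, h2⟩, h1.le⟩ h3
    rw [setIntegral_congr_set hset, ← intervalIntegral.integral_of_le hx2]
    have : (∫ lam in x..C, 2 * lam) = 2 * ∫ lam in x..C, lam :=
      intervalIntegral.integral_const_mul 2 _
    rw [this, integral_id]
    ring
  have hX2int : Integrable (fun ω => X ω ^ 2) μ := by
    refine ⟨(hX.pow_const 2).aestronglyMeasurable,
      HasFiniteIntegral.of_bounded (C := C ^ 2) ?_⟩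
    filter_upwards [hXbdd] with ω hω
    rw [Real.norm_eq_abs, abs_pow]
    exact pow_le_pow_left₀ (abs_nonneg _) hω 2
  have hLHS : ∫ ω, (∫ lam in Set.Ioc (-C) C, F ω lam) ∂μ
      = C ^ 2 - ∫ ω, X ω ^ 2 ∂μ := by
    rw [integral_congr_ae (g := fun ω => C ^ 2 - X ω ^ 2)
        (hXbdd.mono fun ω hω => inner1 (X ω) hω),
      integral_sub (integrable_const _) hX2int, integral_const]
    simp
  have hRHS : ∫ lam in Set.Ioc (-C) C, (∫ ω, F ω lam ∂μ)
      = ∫ lam in Set.Ioc (-C) C, 2 * lam * (μ {ω | X ω ≤ lam}).toReal := by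
    refine setIntegral_congr_fun measurableSet_Ioc fun lam _ => ?_
    have hs : MeasurableSet {ω | X ω ≤ lam} := hX measurableSet_Iic
    have heq : (fun ω => F ω lam) = Set.indicator {ω | X ω ≤ lam} (fun _ => 2 * lam) := by
      ext ω; simp [hF, Set.indicator_apply, Set.mem_setOf_eq]
    rw [heq, integral_indicator_const _ hs, smul_eq_mul, measureReal_def]; ring
  rw [hLHS, hRHS] at hswap
  linarith


lemma cdf_toReal_le_one {Ω : Type*} [MeasurableSpace Ω] (μ : Measure Ω)
    [IsProbabilityMeasure μ] (s : Set Ω) : (μ s).toReal ≤ 1 := by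
  have h := ENNReal.toReal_mono (measure_ne_top μ Set.univ)
    (measure_mono (Set.subset_univ s))
  simpa using h

lemma int_g {Ω : Type*} [MeasurableSpace Ω] (μ : Measure Ω) [IsProbabilityMeasure μ]
    (X : Ω → ℝ) (hX : Measurable X) (C : ℝ) (hC : 0 < C) :
    IntegrableOn (fun lam => 2 * lam * (μ {ω | X ω ≤ lam}).toReal)
      (Set.Ioc (-C) C) MeasureTheory.volume := by
  haveI := volume_Ioc_finite C
  have hmono : Monotone (fun lam : ℝ => (μ {ω | X ω ≤ lam}).toReal) := fun a b hab =>
    ENNReal.toReal_mono (measure_ne_top μ _) (measure_mono fun ω hω => le_trans hω hab)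
  refine ⟨(((measurable_const.mul measurable_id).mul hmono.measurable)).aestronglyMeasurable
    |>.restrict, HasFiniteIntegral.of_bounded (C := 2 * C) ?_⟩
  filter_upwards [ae_restrict_mem measurableSet_Ioc] with lam hlam
  have h1 : |lam| ≤ C := abs_le.2 ⟨hlam.1.le, hlam.2⟩
  have h2 : (μ {ω | X ω ≤ lam}).toReal ≤ 1 := cdf_toReal_le_one μ _
  have h3 : (0:ℝ) ≤ (μ {ω | X ω ≤ lam}).toReal := ENNReal.toReal_nonneg
  rw [Real.norm_eq_abs, abs_mul, abs_mul, abs_two,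
    abs_of_nonneg h3]
  nlinarith [abs_nonneg lam]

/-- If `X` and `Y` are real random variables (possibly on different probability
spaces) with `|X| ≤ C` and `|Y| ≤ C` almost surely, then
`|E[X²] - E[Y²]| ≤ 4C² · sup_λ |P(X ≤ λ) - P(Y ≤ λ)|`. -/
theorem abs_integral_sq_sub_le_four_mul_sup_cdf_dist
    {Ω₁ Ω₂ : Type*} [MeasurableSpace Ω₁] [MeasurableSpace Ω₂]
    (μ : Measure Ω₁) (ν : Measure Ω₂) [IsProbabilityMeasure μ] [IsProbabilityMeasure ν]
    (X : Ω₁ → ℝ) (Y : Ω₂ → ℝ) (hX : Measurable X) (hY : Measurable Y)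
    (C : ℝ) (hC : 0 < C)
    (hXbdd : ∀ᵐ ω ∂μ, |X ω| ≤ C) (hYbdd : ∀ᵐ ω ∂ν, |Y ω| ≤ C) :
    |μ[fun ω => X ω ^ 2] - ν[fun ω => Y ω ^ 2]| ≤
      4 * C ^ 2 * ⨆ lam : ℝ, |(μ {ω | X ω ≤ lam}).toReal - (ν {ω | Y ω ≤ lam}).toReal| := by
  have hbdd : BddAbove (Set.range fun lam : ℝ =>
      |(μ {ω | X ω ≤ lam}).toReal - (ν {ω | Y ω ≤ lam}).toReal|) := by
    refine ⟨1, ?_⟩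
    rintro x ⟨lam, rfl⟩
    have h1 := cdf_toReal_le_one μ {ω | X ω ≤ lam}
    have h2 := cdf_toReal_le_one ν {ω | Y ω ≤ lam}
    have h3 : (0:ℝ) ≤ (μ {ω | X ω ≤ lam}).toReal := ENNReal.toReal_nonneg
    have h4 : (0:ℝ) ≤ (ν {ω | Y ω ≤ lam}).toReal := ENNReal.toReal_nonneg
    rw [abs_sub_le_iff]
    constructor <;> linarith
  set M := ⨆ lam : ℝ, |(μ {ω | X ω ≤ lam}).toReal - (ν {ω | Y ω ≤ lam}).toReal| with hM
  have hM0 : 0 ≤ M := le_trans (abs_nonneg _) (le_ciSup hbdd 0)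
  have hMle : ∀ lam : ℝ,
      |(μ {ω | X ω ≤ lam}).toReal - (ν {ω | Y ω ≤ lam}).toReal| ≤ M :=
    fun lam => le_ciSup hbdd lam
  have hintX := int_g μ X hX C hC
  have hintY := int_g ν Y hY C hC
  have hkX := key_sq_eq μ X hX C hC hXbdd
  have hkY := key_sq_eq ν Y hY C hC hYbdd
  rw [hkX, hkY]
  have hsub : (C ^ 2 - ∫ lam in Set.Ioc (-C) C, 2 * lam * (μ {ω | X ω ≤ lam}).toReal)
      - (C ^ 2 - ∫ lam in Set.Ioc (-C) C, 2 * lam * (ν {ω | Y ω ≤ lam}).toReal)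
      = ∫ lam in Set.Ioc (-C) C,
          (2 * lam * (ν {ω | Y ω ≤ lam}).toReal - 2 * lam * (μ {ω | X ω ≤ lam}).toReal) := by
    rw [integral_sub hintY hintX]; ring
  rw [hsub]
  have hvol : (MeasureTheory.volume (Set.Ioc (-C) C)).toReal = 2 * C := by
    rw [Real.volume_Ioc, ENNReal.toReal_ofReal (by linarith)]
    ring
  have hbound := norm_setIntegral_le_of_norm_le_const
    (μ := MeasureTheory.volume) (C := 2 * C * M)
    (f := fun lam => 2 * lam * (ν {ω | Y ω ≤ lam}).toReal
      - 2 * lam * (μ {ω | X ω ≤ lam}).toReal)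
    (s := Set.Ioc (-C) C)
    (by rw [Real.volume_Ioc]; exact ENNReal.ofReal_lt_top)
    (fun lam hlam => ?_)
  · rw [Real.norm_eq_abs] at hbound
    rw [measureReal_def, hvol] at hbound
    have : 2 * C * M * (2 * C) = 4 * C ^ 2 * M := by ring
    linarith
  · have h1 : |lam| ≤ C := abs_le.2 ⟨hlam.1.le, hlam.2⟩
    have h2 := hMle lam
    have heq : (2 * lam * (ν {ω | Y ω ≤ lam}).toReal
        - 2 * lam * (μ {ω | X ω ≤ lam}).toReal)
        = 2 * lam * ((ν {ω | Y ω ≤ lam}).toReal - (μ {ω | X ω ≤ lam}).toReal) := by ring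
    beta_reduce
    rw [Real.norm_eq_abs, heq, abs_mul, abs_mul, abs_two,
      abs_sub_comm]
    nlinarith [abs_nonneg lam, abs_nonneg ((μ {ω | X ω ≤ lam}).toReal - (ν {ω | Y ω ≤ lam}).toReal)]
end

section
/- Let X and Y be real-valued random variables with |X| ≤ C and |Y| ≤ C almost surely, for some constant C > 0. Then the variances satisfy |Var(X) − Var(Y)| ≤ 8C² · sup_{λ ∈ ℝ} |P(X ≤ λ) − P(Y ≤ λ)|. -/
open MeasureTheory ProbabilityTheory Filter Set

section Aux

variable {Ω₁ Ω₂ : Type*} [MeasurableSpace Ω₁] [MeasurableSpace Ω₂]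

private lemma aux_integrable {Ω : Type*} [MeasurableSpace Ω] {μ : Measure Ω}
    [IsProbabilityMeasure μ] {f : Ω → ℝ} (hf : Measurable f) {B : ℝ}
    (h : ∀ᵐ ω ∂μ, |f ω| ≤ B) : Integrable f μ :=
  ⟨hf.aestronglyMeasurable, HasFiniteIntegral.of_bounded (h.mono fun ω hω => by
    simpa [Real.norm_eq_abs] using hω)⟩

/-- Key layer-cake comparison lemma. -/
private lemma aux_layer_diff (μ : Measure Ω₁) (ν : Measure Ω₂)
    [IsProbabilityMeasure μ] [IsProbabilityMeasure ν]
    (f : Ω₁ → ℝ) (g : Ω₂ → ℝ) (hf : Measurable f) (hg : Measurable g)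
    (T K : ℝ) (hT : 0 < T) (hK : 0 ≤ K)
    (hf0 : ∀ᵐ ω ∂μ, 0 ≤ f ω ∧ f ω ≤ T) (hg0 : ∀ᵐ ω ∂ν, 0 ≤ g ω ∧ g ω ≤ T)
    (hbd : ∀ᵐ t ∂(volume.restrict (Set.Ioc (0:ℝ) T)),
      |(μ {ω | t < f ω}).toReal - (ν {ω | t < g ω}).toReal| ≤ K) :
    |∫ ω, f ω ∂μ - ∫ ω, g ω ∂ν| ≤ T * K := by
  set φ : ℝ → ℝ := fun t => (μ {ω | t < f ω}).toReal with hφdef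
  set ψ : ℝ → ℝ := fun t => (ν {ω | t < g ω}).toReal with hψdef
  have hφm : Measurable φ :=
    Measurable.ennreal_toReal <| Antitone.measurable
      (fun _ _ hst => measure_mono (fun _ h => lt_of_le_of_lt hst h))
  have hψm : Measurable ψ :=
    Measurable.ennreal_toReal <| Antitone.measurable
      (fun _ _ hst => measure_mono (fun _ h => lt_of_le_of_lt hst h))
  have hφ1 : ∀ t, |φ t| ≤ 1 := by
    intro t
    rw [abs_of_nonneg ENNReal.toReal_nonneg]
    exact ENNReal.toReal_le_of_le_ofReal zero_le_one (by simpa using prob_le_one)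
  have hψ1 : ∀ t, |ψ t| ≤ 1 := by
    intro t
    rw [abs_of_nonneg ENNReal.toReal_nonneg]
    exact ENNReal.toReal_le_of_le_ofReal zero_le_one (by simpa using prob_le_one)
  have hφ0 : ∀ t, T ≤ t → φ t = 0 := by
    intro t ht
    have : μ {ω | t < f ω} = 0 := by
      refine measure_mono_null (fun ω hω => ?_) (ae_iff.1 hf0)
      simp only [Set.mem_setOf_eq] at hω ⊢
      intro hc
      linarith [hc.2]
    simp [hφdef, this]
  have hψ0 : ∀ t, T ≤ t → ψ t = 0 := by
    intro t ht
    have : ν {ω | t < g ω} = 0 := by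
      refine measure_mono_null (fun ω hω => ?_) (ae_iff.1 hg0)
      simp only [Set.mem_setOf_eq] at hω ⊢
      intro hc
      linarith [hc.2]
    simp [hψdef, this]
  have hfint : Integrable f μ :=
    aux_integrable hf (hf0.mono fun ω h => abs_le.2 ⟨by linarith [h.1], h.2⟩)
  have hgint : Integrable g ν :=
    aux_integrable hg (hg0.mono fun ω h => abs_le.2 ⟨by linarith [h.1], h.2⟩)
  have hlcf : ∫ ω, f ω ∂μ = ∫ t in Set.Ioi (0:ℝ), φ t :=
    hfint.integral_eq_integral_meas_lt (hf0.mono fun ω h => h.1)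
  have hlcg : ∫ ω, g ω ∂ν = ∫ t in Set.Ioi (0:ℝ), ψ t :=
    hgint.integral_eq_integral_meas_lt (hg0.mono fun ω h => h.1)
  -- restrict integrals to Ioc 0 T
  have hIocφ : IntegrableOn φ (Set.Ioc 0 T) := by
    refine ⟨hφm.aestronglyMeasurable, HasFiniteIntegral.of_bounded (C := 1) ?_⟩
    exact ae_of_all _ fun t => by simpa [Real.norm_eq_abs] using hφ1 t
  have hIocψ : IntegrableOn ψ (Set.Ioc 0 T) := by
    refine ⟨hψm.aestronglyMeasurable, HasFiniteIntegral.of_bounded (C := 1) ?_⟩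
    exact ae_of_all _ fun t => by simpa [Real.norm_eq_abs] using hψ1 t
  have hIoiφ : IntegrableOn φ (Set.Ioi T) :=
    (integrable_zero _ _ _).congr <|
      (ae_restrict_iff' measurableSet_Ioi).2 <| ae_of_all _ fun t ht => (hφ0 t ht.le).symm
  have hIoiψ : IntegrableOn ψ (Set.Ioi T) :=
    (integrable_zero _ _ _).congr <|
      (ae_restrict_iff' measurableSet_Ioi).2 <| ae_of_all _ fun t ht => (hψ0 t ht.le).symm
  have hsplit : Set.Ioi (0:ℝ) = Set.Ioc 0 T ∪ Set.Ioi T := (Set.Ioc_union_Ioi_eq_Ioi hT.le).symm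
  have hφsplit : ∫ t in Set.Ioi (0:ℝ), φ t = ∫ t in Set.Ioc 0 T, φ t := by
    rw [hsplit, setIntegral_union (Set.Ioc_disjoint_Ioi le_rfl) measurableSet_Ioi hIocφ hIoiφ]
    rw [setIntegral_congr_fun measurableSet_Ioi (fun t ht => hφ0 t (le_of_lt ht))]
    simp
  have hψsplit : ∫ t in Set.Ioi (0:ℝ), ψ t = ∫ t in Set.Ioc 0 T, ψ t := by
    rw [hsplit, setIntegral_union (Set.Ioc_disjoint_Ioi le_rfl) measurableSet_Ioi hIocψ hIoiψ]
    rw [setIntegral_congr_fun measurableSet_Ioi (fun t ht => hψ0 t (le_of_lt ht))]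
    simp
  rw [hlcf, hlcg, hφsplit, hψsplit, ← integral_sub hIocφ hIocψ]
  have habs : |∫ t in Set.Ioc (0:ℝ) T, (φ t - ψ t)| ≤ ∫ t in Set.Ioc (0:ℝ) T, |φ t - ψ t| := by
    simpa [Real.norm_eq_abs] using
      norm_integral_le_integral_norm (μ := volume.restrict (Set.Ioc (0:ℝ) T))
        (f := fun t => φ t - ψ t)
  refine habs.trans ?_
  have hKint : Integrable (fun _ : ℝ => K) (volume.restrict (Set.Ioc (0:ℝ) T)) := by
    apply integrable_const
  have := integral_mono_ae ((hIocφ.sub hIocψ).abs) hKint hbd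
  refine this.trans ?_
  rw [setIntegral_const]
  rw [Real.volume_real_Ioc, max_eq_left (by linarith)]
  rw [smul_eq_mul]
  ring_nf
  exact le_rfl

end Aux

/-- If `X` and `Y` are real random variables (possibly on different probability
spaces) with `|X| ≤ C` and `|Y| ≤ C` almost surely, then
`|Var(X) - Var(Y)| ≤ 8C² · sup_λ |P(X ≤ λ) - P(Y ≤ λ)|`. -/
theorem abs_variance_sub_le_eight_mul_sup_cdf_dist
    {Ω₁ Ω₂ : Type*} [MeasurableSpace Ω₁] [MeasurableSpace Ω₂]
    (μ : Measure Ω₁) (ν : Measure Ω₂) [IsProbabilityMeasure μ] [IsProbabilityMeasure ν]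
    (X : Ω₁ → ℝ) (Y : Ω₂ → ℝ) (hX : Measurable X) (hY : Measurable Y)
    (C : ℝ) (hC : 0 < C)
    (hXbdd : ∀ᵐ ω ∂μ, |X ω| ≤ C) (hYbdd : ∀ᵐ ω ∂ν, |Y ω| ≤ C) :
    |variance X μ - variance Y ν| ≤
      8 * C ^ 2 * ⨆ lam : ℝ, |(μ {ω | X ω ≤ lam}).toReal - (ν {ω | Y ω ≤ lam}).toReal| := by
  -- basic facts about the sup
  have hF1le : ∀ lam : ℝ, (μ {ω | X ω ≤ lam}).toReal ≤ 1 := fun lam =>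
    ENNReal.toReal_le_of_le_ofReal zero_le_one (by simpa using prob_le_one)
  have hF2le : ∀ lam : ℝ, (ν {ω | Y ω ≤ lam}).toReal ≤ 1 := fun lam =>
    ENNReal.toReal_le_of_le_ofReal zero_le_one (by simpa using prob_le_one)
  have hbddA : BddAbove (Set.range fun lam : ℝ =>
      |(μ {ω | X ω ≤ lam}).toReal - (ν {ω | Y ω ≤ lam}).toReal|) := by
    refine ⟨2, ?_⟩
    rintro x ⟨lam, rfl⟩
    have h1 := hF1le lam; have h2 := hF2le lam
    have h3 : (0:ℝ) ≤ (μ {ω | X ω ≤ lam}).toReal := ENNReal.toReal_nonneg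
    have h4 : (0:ℝ) ≤ (ν {ω | Y ω ≤ lam}).toReal := ENNReal.toReal_nonneg
    exact abs_le.2 ⟨by linarith, by linarith⟩
  have hDle : ∀ lam : ℝ, |(μ {ω | X ω ≤ lam}).toReal - (ν {ω | Y ω ≤ lam}).toReal| ≤
      ⨆ lam : ℝ, |(μ {ω | X ω ≤ lam}).toReal - (ν {ω | Y ω ≤ lam}).toReal| := fun lam =>
    le_ciSup hbddA lam
  set D : ℝ := ⨆ lam : ℝ, |(μ {ω | X ω ≤ lam}).toReal - (ν {ω | Y ω ≤ lam}).toReal| with hDdef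
  have hD0 : 0 ≤ D := (abs_nonneg _).trans (hDle 0)
  -- complement formulas
  have hcomplX : ∀ lam : ℝ, (μ {ω | lam < X ω}).toReal = 1 - (μ {ω | X ω ≤ lam}).toReal := by
    intro lam
    have hset : {ω | lam < X ω} = {ω | X ω ≤ lam}ᶜ := by ext ω; simp [not_le]
    rw [hset, prob_compl_eq_one_sub (s := {ω | X ω ≤ lam}) (hX measurableSet_Iic),
      ENNReal.toReal_sub_of_le prob_le_one ENNReal.one_ne_top, ENNReal.toReal_one]
  have hcomplY : ∀ lam : ℝ, (ν {ω | lam < Y ω}).toReal = 1 - (ν {ω | Y ω ≤ lam}).toReal := by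
    intro lam
    have hset : {ω | lam < Y ω} = {ω | Y ω ≤ lam}ᶜ := by ext ω; simp [not_le]
    rw [hset, prob_compl_eq_one_sub (s := {ω | Y ω ≤ lam}) (hY measurableSet_Iic),
      ENNReal.toReal_sub_of_le prob_le_one ENNReal.one_ne_top, ENNReal.toReal_one]
  -- integrability
  have hXint : Integrable X μ := aux_integrable hX hXbdd
  have hYint : Integrable Y ν := aux_integrable hY hYbdd
  -- Estimate 1 : difference of means
  have hE1 : |(∫ ω, X ω ∂μ) - ∫ ω, Y ω ∂ν| ≤ (2 * C) * D := by
    have hptw : ∀ t : ℝ, |(μ {ω | t < X ω + C}).toReal - (ν {ω | t < Y ω + C}).toReal| ≤ D := by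
      intro t
      have e1 : {ω | t < X ω + C} = {ω | t - C < X ω} := by
        ext ω; simp [sub_lt_iff_lt_add]
      have e2 : {ω | t < Y ω + C} = {ω | t - C < Y ω} := by
        ext ω; simp [sub_lt_iff_lt_add]
      rw [e1, e2, hcomplX, hcomplY]
      have hrw : (1 - (μ {ω | X ω ≤ t - C}).toReal) - (1 - (ν {ω | Y ω ≤ t - C}).toReal)
          = -((μ {ω | X ω ≤ t - C}).toReal - (ν {ω | Y ω ≤ t - C}).toReal) := by ring
      rw [hrw, abs_neg]
      exact hDle (t - C)
    have key := aux_layer_diff μ ν (fun ω => X ω + C) (fun ω => Y ω + C)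
      (hX.add_const C) (hY.add_const C) (2 * C) D (by linarith) hD0
      (hXbdd.mono fun ω h => ⟨show (0:ℝ) ≤ X ω + C by linarith [(abs_le.1 h).1],
        show X ω + C ≤ 2 * C by linarith [(abs_le.1 h).2]⟩)
      (hYbdd.mono fun ω h => ⟨show (0:ℝ) ≤ Y ω + C by linarith [(abs_le.1 h).1],
        show Y ω + C ≤ 2 * C by linarith [(abs_le.1 h).2]⟩)
      (ae_of_all _ hptw)
    have eX : ∫ ω, X ω + C ∂μ = (∫ ω, X ω ∂μ) + C := by
      rw [integral_add hXint (integrable_const C), integral_const]; simp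
    have eY : ∫ ω, Y ω + C ∂ν = (∫ ω, Y ω ∂ν) + C := by
      rw [integral_add hYint (integrable_const C), integral_const]; simp
    rw [eX, eY] at key
    have : (∫ ω, X ω ∂μ) + C - ((∫ ω, Y ω ∂ν) + C) = (∫ ω, X ω ∂μ) - ∫ ω, Y ω ∂ν := by ring
    rwa [this] at key
  -- countable set of atoms
  have hBcnt : Set.Countable
      ({s : ℝ | 0 < μ {ω | X ω = s}} ∪ {s : ℝ | 0 < ν {ω | Y ω = s}}) :=
    (Measure.countable_meas_level_set_pos hX).union (Measure.countable_meas_level_set_pos hY)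
  have hScnt : Set.Countable ((fun s : ℝ => s ^ 2) ''
      ({s : ℝ | 0 < μ {ω | X ω = s}} ∪ {s : ℝ | 0 < ν {ω | Y ω = s}})) := hBcnt.image _
  have hSnull : (volume : Measure ℝ) ((fun s : ℝ => s ^ 2) ''
      ({s : ℝ | 0 < μ {ω | X ω = s}} ∪ {s : ℝ | 0 < ν {ω | Y ω = s}})) = 0 :=
    hScnt.measure_zero _
  -- Estimate 2 : difference of second moments
  have hE2 : |(∫ ω, X ω ^ 2 ∂μ) - ∫ ω, Y ω ^ 2 ∂ν| ≤ C ^ 2 * (2 * D) := by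
    have hbd : ∀ᵐ t ∂(volume.restrict (Set.Ioc (0:ℝ) (C ^ 2))),
        |(μ {ω | t < X ω ^ 2}).toReal - (ν {ω | t < Y ω ^ 2}).toReal| ≤ 2 * D := by
      filter_upwards [ae_restrict_of_ae (measure_eq_zero_iff_ae_notMem.1 hSnull),
        ae_restrict_mem measurableSet_Ioc] with t htS ht
      have ht0 : 0 < t := ht.1
      have hsq : Real.sqrt t ^ 2 = t := Real.sq_sqrt ht0.le
      have hst := Real.sqrt_nonneg t
      -- split the set {t < X²}
      have hXsplit : {ω | t < X ω ^ 2}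
          = {ω | Real.sqrt t < X ω} ∪ {ω | X ω < -Real.sqrt t} := by
        ext ω
        simp only [Set.mem_setOf_eq, Set.mem_union]
        constructor
        · intro h
          rcases le_or_gt (X ω) 0 with h0 | h0
          · right
            by_contra h'
            push_neg at h'
            nlinarith [mul_nonneg (by linarith : (0:ℝ) ≤ Real.sqrt t + X ω)
              (by linarith : (0:ℝ) ≤ Real.sqrt t - X ω)]
          · left
            by_contra h'
            push_neg at h'
            nlinarith [mul_nonneg (by linarith : (0:ℝ) ≤ Real.sqrt t - X ω)
              (by linarith : (0:ℝ) ≤ Real.sqrt t + X ω)]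
        · rintro (h | h)
          · nlinarith [mul_pos (by linarith : (0:ℝ) < X ω - Real.sqrt t)
              (by linarith : (0:ℝ) < X ω + Real.sqrt t)]
          · nlinarith [mul_pos (by linarith : (0:ℝ) < -X ω - Real.sqrt t)
              (by linarith : (0:ℝ) < -X ω + Real.sqrt t)]
      have hYsplit : {ω | t < Y ω ^ 2}
          = {ω | Real.sqrt t < Y ω} ∪ {ω | Y ω < -Real.sqrt t} := by
        ext ω
        simp only [Set.mem_setOf_eq, Set.mem_union]
        constructor
        · intro h
          rcases le_or_gt (Y ω) 0 with h0 | h0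
          · right
            by_contra h'
            push_neg at h'
            nlinarith [mul_nonneg (by linarith : (0:ℝ) ≤ Real.sqrt t + Y ω)
              (by linarith : (0:ℝ) ≤ Real.sqrt t - Y ω)]
          · left
            by_contra h'
            push_neg at h'
            nlinarith [mul_nonneg (by linarith : (0:ℝ) ≤ Real.sqrt t - Y ω)
              (by linarith : (0:ℝ) ≤ Real.sqrt t + Y ω)]
        · rintro (h | h)
          · nlinarith [mul_pos (by linarith : (0:ℝ) < Y ω - Real.sqrt t)
              (by linarith : (0:ℝ) < Y ω + Real.sqrt t)]
          · nlinarith [mul_pos (by linarith : (0:ℝ) < -Y ω - Real.sqrt t)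
              (by linarith : (0:ℝ) < -Y ω + Real.sqrt t)]
      have hXdisj : Disjoint {ω | Real.sqrt t < X ω} {ω | X ω < -Real.sqrt t} :=
        Set.disjoint_left.2 fun ω h1 h2 => by
          simp only [Set.mem_setOf_eq] at h1 h2; linarith
      have hYdisj : Disjoint {ω | Real.sqrt t < Y ω} {ω | Y ω < -Real.sqrt t} :=
        Set.disjoint_left.2 fun ω h1 h2 => by
          simp only [Set.mem_setOf_eq] at h1 h2; linarith
      -- no atom at -√t
      have hXatom : μ {ω | X ω = -Real.sqrt t} = 0 := by
        by_contra h
        apply htS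
        exact ⟨-Real.sqrt t, Or.inl (pos_iff_ne_zero.mpr h), by simpa [neg_sq] using hsq⟩
      have hYatom : ν {ω | Y ω = -Real.sqrt t} = 0 := by
        by_contra h
        apply htS
        exact ⟨-Real.sqrt t, Or.inr (pos_iff_ne_zero.mpr h), by simpa [neg_sq] using hsq⟩
      have hXlt : μ {ω | X ω < -Real.sqrt t} = μ {ω | X ω ≤ -Real.sqrt t} := by
        have hsub1 : {ω | X ω < -Real.sqrt t} ⊆ {ω | X ω ≤ -Real.sqrt t} := by
          intro ω h
          simp only [Set.mem_setOf_eq] at h ⊢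
          exact le_of_lt h
        have hsub2 : {ω | X ω ≤ -Real.sqrt t} ⊆
            {ω | X ω < -Real.sqrt t} ∪ {ω | X ω = -Real.sqrt t} := by
          intro ω h
          simp only [Set.mem_setOf_eq] at h
          simp only [Set.mem_union, Set.mem_setOf_eq]
          exact lt_or_eq_of_le h
        refine le_antisymm (measure_mono hsub1) ?_
        calc μ {ω | X ω ≤ -Real.sqrt t}
            ≤ μ ({ω | X ω < -Real.sqrt t} ∪ {ω | X ω = -Real.sqrt t}) :=
              measure_mono hsub2
          _ ≤ μ {ω | X ω < -Real.sqrt t} + μ {ω | X ω = -Real.sqrt t} := measure_union_le _ _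
          _ = μ {ω | X ω < -Real.sqrt t} := by rw [hXatom, add_zero]
      have hYlt : ν {ω | Y ω < -Real.sqrt t} = ν {ω | Y ω ≤ -Real.sqrt t} := by
        have hsub1 : {ω | Y ω < -Real.sqrt t} ⊆ {ω | Y ω ≤ -Real.sqrt t} := by
          intro ω h
          simp only [Set.mem_setOf_eq] at h ⊢
          exact le_of_lt h
        have hsub2 : {ω | Y ω ≤ -Real.sqrt t} ⊆
            {ω | Y ω < -Real.sqrt t} ∪ {ω | Y ω = -Real.sqrt t} := by
          intro ω h
          simp only [Set.mem_setOf_eq] at h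
          simp only [Set.mem_union, Set.mem_setOf_eq]
          exact lt_or_eq_of_le h
        refine le_antisymm (measure_mono hsub1) ?_
        calc ν {ω | Y ω ≤ -Real.sqrt t}
            ≤ ν ({ω | Y ω < -Real.sqrt t} ∪ {ω | Y ω = -Real.sqrt t}) :=
              measure_mono hsub2
          _ ≤ ν {ω | Y ω < -Real.sqrt t} + ν {ω | Y ω = -Real.sqrt t} := measure_union_le _ _
          _ = ν {ω | Y ω < -Real.sqrt t} := by rw [hYatom, add_zero]
      have hφt : (μ {ω | t < X ω ^ 2}).toReal
          = (1 - (μ {ω | X ω ≤ Real.sqrt t}).toReal)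
            + (μ {ω | X ω ≤ -Real.sqrt t}).toReal := by
        rw [hXsplit, measure_union hXdisj (hX measurableSet_Iio), hXlt,
          ENNReal.toReal_add (measure_ne_top _ _) (measure_ne_top _ _), hcomplX]
      have hψt : (ν {ω | t < Y ω ^ 2}).toReal
          = (1 - (ν {ω | Y ω ≤ Real.sqrt t}).toReal)
            + (ν {ω | Y ω ≤ -Real.sqrt t}).toReal := by
        rw [hYsplit, measure_union hYdisj (hY measurableSet_Iio), hYlt,
          ENNReal.toReal_add (measure_ne_top _ _) (measure_ne_top _ _), hcomplY]
      rw [hφt, hψt]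
      have h1 := hDle (Real.sqrt t)
      have h2 := hDle (-Real.sqrt t)
      have hrw : (1 - (μ {ω | X ω ≤ Real.sqrt t}).toReal + (μ {ω | X ω ≤ -Real.sqrt t}).toReal)
          - (1 - (ν {ω | Y ω ≤ Real.sqrt t}).toReal + (ν {ω | Y ω ≤ -Real.sqrt t}).toReal)
          = -((μ {ω | X ω ≤ Real.sqrt t}).toReal - (ν {ω | Y ω ≤ Real.sqrt t}).toReal)
            + ((μ {ω | X ω ≤ -Real.sqrt t}).toReal - (ν {ω | Y ω ≤ -Real.sqrt t}).toReal) := by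
        ring
      rw [hrw]
      calc |_ + _| ≤ |-((μ {ω | X ω ≤ Real.sqrt t}).toReal - (ν {ω | Y ω ≤ Real.sqrt t}).toReal)|
            + |(μ {ω | X ω ≤ -Real.sqrt t}).toReal - (ν {ω | Y ω ≤ -Real.sqrt t}).toReal| :=
          abs_add_le _ _
        _ ≤ D + D := by rw [abs_neg]; exact add_le_add h1 h2
        _ = 2 * D := by ring
    exact aux_layer_diff μ ν (fun ω => X ω ^ 2) (fun ω => Y ω ^ 2)
      (hX.pow_const 2) (hY.pow_const 2) (C ^ 2) (2 * D) (by positivity) (by linarith)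
      (hXbdd.mono fun ω h => ⟨sq_nonneg _, sq_le_sq' (neg_le_of_abs_le h) (le_of_abs_le h)⟩)
      (hYbdd.mono fun ω h => ⟨sq_nonneg _, sq_le_sq' (neg_le_of_abs_le h) (le_of_abs_le h)⟩)
      hbd
  -- variance formulas
  have hmemX : MemLp X 2 μ :=
    (memLp_top_of_bound hX.aestronglyMeasurable C
      (hXbdd.mono fun ω h => by simpa [Real.norm_eq_abs] using h)).mono_exponent le_top
  have hmemY : MemLp Y 2 ν :=
    (memLp_top_of_bound hY.aestronglyMeasurable C
      (hYbdd.mono fun ω h => by simpa [Real.norm_eq_abs] using h)).mono_exponent le_top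
  have hvX : variance X μ = (∫ ω, X ω ^ 2 ∂μ) - (∫ ω, X ω ∂μ) ^ 2 := by
    rw [variance_eq_sub hmemX]; rfl
  have hvY : variance Y ν = (∫ ω, Y ω ^ 2 ∂ν) - (∫ ω, Y ω ∂ν) ^ 2 := by
    rw [variance_eq_sub hmemY]; rfl
  -- means are bounded by C
  have haX : |∫ ω, X ω ∂μ| ≤ C := by
    calc |∫ ω, X ω ∂μ| ≤ ∫ ω, |X ω| ∂μ := by
          simpa [Real.norm_eq_abs] using norm_integral_le_integral_norm (μ := μ) (f := X)
      _ ≤ ∫ _, C ∂μ := integral_mono_ae hXint.abs (integrable_const C) hXbdd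
      _ = C := by simp
  have haY : |∫ ω, Y ω ∂ν| ≤ C := by
    calc |∫ ω, Y ω ∂ν| ≤ ∫ ω, |Y ω| ∂ν := by
          simpa [Real.norm_eq_abs] using norm_integral_le_integral_norm (μ := ν) (f := Y)
      _ ≤ ∫ _, C ∂ν := integral_mono_ae hYint.abs (integrable_const C) hYbdd
      _ = C := by simp
  -- put everything together
  rw [hvX, hvY]
  set a : ℝ := ∫ ω, X ω ∂μ
  set b : ℝ := ∫ ω, Y ω ∂ν
  set a2 : ℝ := ∫ ω, X ω ^ 2 ∂μ
  set b2 : ℝ := ∫ ω, Y ω ^ 2 ∂ν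
  have habs2 : |a ^ 2 - b ^ 2| ≤ (2 * C) * D * (2 * C) := by
    have hfac : a ^ 2 - b ^ 2 = (a - b) * (a + b) := by ring
    rw [hfac, abs_mul]
    have hab : |a + b| ≤ 2 * C := by
      calc |a + b| ≤ |a| + |b| := abs_add_le _ _
        _ ≤ 2 * C := by linarith
    exact mul_le_mul hE1 hab (abs_nonneg _) (by positivity)
  calc |a2 - a ^ 2 - (b2 - b ^ 2)|
      = |(a2 - b2) - (a ^ 2 - b ^ 2)| := by congr 1; ring
    _ ≤ |a2 - b2| + |a ^ 2 - b ^ 2| := abs_sub _ _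
    _ ≤ C ^ 2 * (2 * D) + (2 * C) * D * (2 * C) := add_le_add hE2 habs2
    _ ≤ 8 * C ^ 2 * D := by nlinarith [sq_nonneg C, mul_nonneg (sq_nonneg C) hD0]
end

section
/- Fix B ≥ 2 and let x ∈ ℝ^B be a point where σ(x) > 0. The normalization map y : ℝ^B → ℝ^B defined by y_a(x) = (x_a − μ(x))/σ(x) is differentiable at x, and its partial derivatives are ∂y_a/∂x_b (x) = (1/σ(x)) · (δ_{ab} − 1/B − y_a(x)·y_b(x)/B), where δ_{ab} is 1 if a = b and 0 otherwise. -/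
open scoped BigOperators

/-- Batch mean `μ(x) = (1/B) ∑_b x_b`. -/
noncomputable def batchMean {B : ℕ} (x : Fin B → ℝ) : ℝ :=
  (∑ b, x b) / B

/-- Batch standard deviation `σ(x) = sqrt((1/B) ∑_b (x_b - μ(x))²)`. -/
noncomputable def batchStd {B : ℕ} (x : Fin B → ℝ) : ℝ :=
  Real.sqrt ((∑ b, (x b - batchMean x) ^ 2) / B)

/-- Batch normalization map `y_a(x) = (x_a - μ(x)) / σ(x)`. -/
noncomputable def batchNorm {B : ℕ} (x : Fin B → ℝ) : Fin B → ℝ :=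
  fun a => (x a - batchMean x) / batchStd x

/-- For `B ≥ 2` and `x ∈ ℝ^B` with `σ(x) > 0`, the batch normalization map is
differentiable at `x`, with partial derivatives
`∂y_a/∂x_b = (1/σ(x)) (δ_{ab} - 1/B - y_a(x) y_b(x)/B)`. -/
theorem batchNorm_differentiableAt_and_fderiv
    {B : ℕ} (hB : 2 ≤ B) (x : Fin B → ℝ) (hσ : 0 < batchStd x) :
    DifferentiableAt ℝ (batchNorm (B := B)) x ∧
    ∀ a b : Fin B,
      fderiv ℝ (batchNorm (B := B)) x (Pi.single b 1) a =
        (1 / batchStd x) *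
          ((if a = b then (1 : ℝ) else 0) - 1 / B - batchNorm x a * batchNorm x b / B) := by
  classical
  have hBn : (B : ℝ) ≠ 0 := by
    have : 0 < B := lt_of_lt_of_le (by norm_num) hB
    exact_mod_cast this.ne'
  have hσ0 : batchStd x ≠ 0 := ne_of_gt hσ
  -- derivative of the mean
  set Lμ : (Fin B → ℝ) →L[ℝ] ℝ :=
    (B : ℝ)⁻¹ • ∑ c, ContinuousLinearMap.proj c with hLμ
  have hμ : HasFDerivAt (batchMean (B := B)) Lμ x := by
    have h : (batchMean (B := B)) = fun y => Lμ y := by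
      funext y
      simp [batchMean, hLμ, ContinuousLinearMap.sum_apply, div_eq_inv_mul]
    rw [h]; exact Lμ.hasFDerivAt
  -- derivative of the variance
  set LV : (Fin B → ℝ) →L[ℝ] ℝ :=
    (B : ℝ)⁻¹ • ∑ c, (2 * (x c - batchMean x)) • (ContinuousLinearMap.proj c - Lμ) with hLV
  have hV : HasFDerivAt (fun y : Fin B → ℝ => (∑ c, (y c - batchMean y) ^ 2) / B) LV x := by
    have hsum : HasFDerivAt (fun y : Fin B → ℝ => ∑ c, (y c - batchMean y) ^ 2)
        (∑ c, (2 * (x c - batchMean x)) • (ContinuousLinearMap.proj c - Lμ)) x := by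
      apply HasFDerivAt.fun_sum
      intro c _
      have h1 : HasFDerivAt (fun y : Fin B → ℝ => y c - batchMean y)
          (ContinuousLinearMap.proj c - Lμ) x :=
        (hasFDerivAt_apply c x).sub hμ
      have h2 := h1.fun_mul h1
      have h3 : (fun y : Fin B → ℝ => (y c - batchMean y) * (y c - batchMean y)) =
          fun y : Fin B → ℝ => (y c - batchMean y) ^ 2 := by
        funext y; ring
      rw [h3] at h2
      have h7 : (2 * (x c - batchMean x)) • (ContinuousLinearMap.proj c - Lμ : (Fin B → ℝ) →L[ℝ] ℝ) =
          (x c - batchMean x) • (ContinuousLinearMap.proj c - Lμ) +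
            (x c - batchMean x) • (ContinuousLinearMap.proj c - Lμ) := by
        rw [two_mul, add_smul]
      rw [h7]
      exact h2
    have h4 : (fun y : Fin B → ℝ => (∑ c, (y c - batchMean y) ^ 2) / B) =
        fun y : Fin B → ℝ => (B : ℝ)⁻¹ * ∑ c, (y c - batchMean y) ^ 2 := by
      funext y; rw [div_eq_inv_mul]
    rw [h4, hLV]
    exact hsum.const_mul _
  -- derivative of the std
  have hVx : (∑ c, (x c - batchMean x) ^ 2) / B ≠ 0 :=
    ne_of_gt (Real.sqrt_pos.mp hσ)
  have hs : HasFDerivAt (batchStd (B := B))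
      ((1 / (2 * batchStd x)) • LV) x :=
    (Real.hasDerivAt_sqrt hVx).comp_hasFDerivAt x hV
  -- derivative of inverse std
  have hinv : HasFDerivAt (fun y : Fin B → ℝ => (batchStd y)⁻¹)
      ((-(batchStd x ^ 2)⁻¹) • ((1 / (2 * batchStd x)) • LV)) x :=
    (hasDerivAt_inv hσ0).comp_hasFDerivAt x hs
  -- derivative of each component
  set L : Fin B → ((Fin B → ℝ) →L[ℝ] ℝ) := fun a =>
    (x a - batchMean x) • ((-(batchStd x ^ 2)⁻¹) • ((1 / (2 * batchStd x)) • LV)) +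
      (batchStd x)⁻¹ • (ContinuousLinearMap.proj a - Lμ) with hL
  have hya : ∀ a : Fin B,
      HasFDerivAt (fun y : Fin B → ℝ => (y a - batchMean y) * (batchStd y)⁻¹) (L a) x :=
    fun a => ((hasFDerivAt_apply a x).sub hμ).mul hinv
  have hF : HasFDerivAt (batchNorm (B := B)) (ContinuousLinearMap.pi L) x := by
    have h : batchNorm (B := B) =
        fun y a => (y a - batchMean y) * (batchStd y)⁻¹ := by
      funext y a; rw [batchNorm, div_eq_mul_inv]
    rw [h]
    exact hasFDerivAt_pi.mpr hya
  refine ⟨hF.differentiableAt, ?_⟩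
  intro a b
  rw [hF.fderiv]
  -- key fact: centered sum vanishes
  have key : ∑ c, (x c - batchMean x) = 0 := by
    rw [Finset.sum_sub_distrib, Finset.sum_const, Finset.card_univ, Fintype.card_fin,
      nsmul_eq_mul, batchMean]
    field_simp
    ring
  -- evaluate Lμ at the basis vector
  have hone : ∑ d, (Pi.single b (1:ℝ)) d = 1 := by
    simp [Pi.single_apply]
  have hμv : Lμ (Pi.single b 1) = (B : ℝ)⁻¹ := by
    simp [hLμ, ContinuousLinearMap.sum_apply, Pi.single_apply]
  have hVv : LV (Pi.single b 1) = (B : ℝ)⁻¹ * (2 * (x b - batchMean x)) := by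
    rw [hLV]
    simp only [ContinuousLinearMap.smul_apply, ContinuousLinearMap.sum_apply,
      ContinuousLinearMap.sub_apply, ContinuousLinearMap.proj_apply, smul_eq_mul, hμv]
    congr 1
    have : ∀ c : Fin B, 2 * (x c - batchMean x) * ((Pi.single b (1:ℝ) : Fin B → ℝ) c - (B:ℝ)⁻¹) =
        2 * (x c - batchMean x) * (Pi.single b (1:ℝ) : Fin B → ℝ) c -
          (B:ℝ)⁻¹ * (2 * (x c - batchMean x)) := by
      intro c; ring
    rw [Finset.sum_congr rfl fun c _ => this c, Finset.sum_sub_distrib]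
    have h5 : ∑ c, 2 * (x c - batchMean x) * (Pi.single b (1:ℝ) : Fin B → ℝ) c
        = 2 * (x b - batchMean x) := by
      simp [Pi.single_apply, mul_ite]
    have h6 : ∑ c, (B:ℝ)⁻¹ * (2 * (x c - batchMean x)) = 0 := by
      rw [← Finset.mul_sum]
      have : ∑ c, 2 * (x c - batchMean x) = 2 * ∑ c, (x c - batchMean x) := by
        rw [Finset.mul_sum]
      rw [this, key]; ring
    rw [h5, h6, sub_zero]
  -- now compute
  simp only [ContinuousLinearMap.pi_apply, hL, ContinuousLinearMap.add_apply,
    ContinuousLinearMap.smul_apply, ContinuousLinearMap.sub_apply,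
    ContinuousLinearMap.proj_apply, smul_eq_mul, hμv, hVv, Pi.single_apply]
  rw [batchNorm, batchNorm]
  have hσsq : batchStd x ^ 2 ≠ 0 := pow_ne_zero 2 hσ0
  field_simp
  ring
end

section
/- Fix B ≥ 2, let x ∈ ℝ^B be a point where σ(x) > 0, and let L : ℝ^B → ℝ be differentiable at y(x). Then L ∘ y is differentiable at x and its partial derivatives satisfy the batch-normalization backward formula: ∂(L∘y)/∂x_b (x) = (1/σ(x)) · (∂L/∂y_b (y(x)) − g − y_b(x)·Ψ), where g = (1/B) Σ_{a=1}^B ∂L/∂y_a (y(x)) and Ψ = (1/B) Σ_{a=1}^B y_a(x) · ∂L/∂y_a (y(x)). -/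
open scoped BigOperators

lemma clm_eval {B : ℕ} (l : (Fin B → ℝ) →L[ℝ] ℝ) (v : Fin B → ℝ) :
    l v = ∑ a, v a * l (Pi.single a 1) := by
  have hv : v = ∑ a, v a • (Pi.single a 1 : Fin B → ℝ) := by
    funext j
    simp [Pi.single_apply, Finset.sum_apply, mul_ite, Finset.sum_ite_eq]
  calc l v = l (∑ a, v a • (Pi.single a 1 : Fin B → ℝ)) := by rw [← hv]
    _ = ∑ a, v a * l (Pi.single a 1) := by
        rw [map_sum]; simp [smul_eq_mul]

/-- For `B ≥ 2`, `x ∈ ℝ^B` with `σ(x) > 0`, and `L : ℝ^B → ℝ` differentiable at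
`y(x)`, the composite `L ∘ y` is differentiable at `x` and satisfies the batch-normalization
backward formula
`∂(L∘y)/∂x_b = (1/σ(x)) (∂L/∂y_b - g - y_b(x) Ψ)`, where
`g = (1/B) ∑_a ∂L/∂y_a` and `Ψ = (1/B) ∑_a y_a(x) ∂L/∂y_a`. -/
theorem batchNorm_backward
    {B : ℕ} (hB : 2 ≤ B) (x : Fin B → ℝ) (hσ : 0 < batchStd x)
    (L : (Fin B → ℝ) → ℝ) (hL : DifferentiableAt ℝ L (batchNorm x)) :
    DifferentiableAt ℝ (L ∘ batchNorm (B := B)) x ∧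
    ∀ b : Fin B,
      fderiv ℝ (L ∘ batchNorm (B := B)) x (Pi.single b 1) =
        (1 / batchStd x) *
          (fderiv ℝ L (batchNorm x) (Pi.single b 1)
            - (∑ a, fderiv ℝ L (batchNorm x) (Pi.single a 1)) / B
            - batchNorm x b *
                ((∑ a, batchNorm x a * fderiv ℝ L (batchNorm x) (Pi.single a 1)) / B)) := by
  have hB0 : (B : ℝ) ≠ 0 := by positivity
  set σ : ℝ := batchStd x with hσdef
  have hσ0 : σ ≠ 0 := ne_of_gt hσ
  set u : Fin B → ℝ := fun a => x a - batchMean x with hu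
  -- the mean as a continuous linear map
  set M : (Fin B → ℝ) →L[ℝ] ℝ :=
    (B : ℝ)⁻¹ • (∑ b, ContinuousLinearMap.proj (R := ℝ) (φ := fun _ : Fin B => ℝ) b) with hM
  have hMapp : ∀ z : Fin B → ℝ, M z = batchMean z := by
    intro z
    simp [hM, batchMean, ContinuousLinearMap.sum_apply, div_eq_inv_mul]
  have hMean : HasFDerivAt (batchMean (B := B)) M x := by
    have : (batchMean (B := B)) = fun z => M z := by funext z; rw [hMapp]
    rw [this]; exact M.hasFDerivAt
  -- F a : derivative of z ↦ z a - μ z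
  set F : Fin B → (Fin B → ℝ) →L[ℝ] ℝ :=
    fun a => ContinuousLinearMap.proj (R := ℝ) (φ := fun _ : Fin B => ℝ) a - M with hF
  have hFd : ∀ a, HasFDerivAt (fun z : Fin B → ℝ => z a - batchMean z) (F a) x :=
    fun a => (hasFDerivAt_apply a x).sub hMean
  -- q : z ↦ (1/B) ∑ (z a - μ z)^2
  set q : (Fin B → ℝ) → ℝ := fun z => (B : ℝ)⁻¹ * ∑ a, (z a - batchMean z) ^ 2 with hq
  set Q : (Fin B → ℝ) →L[ℝ] ℝ := (B : ℝ)⁻¹ • ∑ a, (2 * u a) • F a with hQ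
  have hqd : HasFDerivAt q Q x := by
    have hsq : ∀ a : Fin B,
        HasFDerivAt (fun z : Fin B → ℝ => (z a - batchMean z) ^ 2) ((2 * u a) • F a) x := by
      intro a
      have := (hFd a).fun_mul (hFd a)
      have heq : (fun z : Fin B → ℝ => (z a - batchMean z) ^ 2)
          = fun z => (z a - batchMean z) * (z a - batchMean z) := by
        funext z; ring
      rw [heq]
      refine this.congr_fderiv ?_
      ext z
      simp [two_mul, add_smul, hu]
    have hsum : HasFDerivAt (fun z : Fin B → ℝ => ∑ a, (z a - batchMean z) ^ 2)
        (∑ a, (2 * u a) • F a) x := HasFDerivAt.fun_sum (fun a _ => hsq a)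
    exact hsum.const_mul _
  have hstd_eq : (batchStd (B := B)) = fun z => Real.sqrt (q z) := by
    funext z; simp [batchStd, hq, div_eq_inv_mul]
  have hqx_pos : 0 < q x := by
    have h1 : 0 < Real.sqrt (q x) := by
      have : batchStd x = Real.sqrt (q x) := by rw [hstd_eq]
      rw [← this]; exact hσ
    exact Real.sqrt_pos.mp h1
  have hqx : q x ≠ 0 := ne_of_gt hqx_pos
  set S : (Fin B → ℝ) →L[ℝ] ℝ := (1 / (2 * Real.sqrt (q x))) • Q with hS
  have hσd : HasFDerivAt (batchStd (B := B)) S x := by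
    rw [hstd_eq]; exact hqd.sqrt hqx
  have hσx : Real.sqrt (q x) = σ := by rw [hσdef, hstd_eq]
  -- inverse of std
  have hinvd : HasFDerivAt (fun z : Fin B → ℝ => (batchStd z)⁻¹) ((-(σ ^ 2)⁻¹) • S) x :=
    (hasDerivAt_inv hσ0).comp_hasFDerivAt x hσd
  -- the coordinate derivatives of batchNorm
  set Φ : Fin B → (Fin B → ℝ) →L[ℝ] ℝ :=
    fun a => u a • ((-(σ ^ 2)⁻¹) • S) + σ⁻¹ • F a with hΦ
  have hyd : ∀ a, HasFDerivAt (fun z : Fin B → ℝ => batchNorm z a) (Φ a) x := by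
    intro a
    have := (hFd a).mul hinvd
    have heq : (fun z : Fin B → ℝ => batchNorm z a)
        = fun z => (z a - batchMean z) * (batchStd z)⁻¹ := by
      funext z; simp [batchNorm, div_eq_mul_inv]
    rw [heq]
    exact this
  have hY : HasFDerivAt (batchNorm (B := B)) (ContinuousLinearMap.pi Φ) x := by
    exact hasFDerivAt_pi.2 hyd
  have hC : HasFDerivAt (L ∘ batchNorm (B := B))
      ((fderiv ℝ L (batchNorm x)).comp (ContinuousLinearMap.pi Φ)) x :=
    hL.hasFDerivAt.comp x hY
  refine ⟨hC.differentiableAt, ?_⟩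
  intro b
  rw [hC.fderiv]
  -- evaluate
  have hsumu : ∑ a, u a = 0 := by
    simp only [hu, Finset.sum_sub_distrib, Finset.sum_const, Finset.card_univ, Fintype.card_fin,
      nsmul_eq_mul, batchMean]
    field_simp
    simp
  have hMe : M (Pi.single b 1) = (B : ℝ)⁻¹ := by
    simp [hM, ContinuousLinearMap.sum_apply, Pi.single_apply, Finset.sum_ite_eq']
  have hFe : ∀ c, F c (Pi.single b 1) = (if c = b then (1:ℝ) else 0) - (B : ℝ)⁻¹ := by
    intro c
    simp [hF, hMe, Pi.single_apply]
  have hQe : Q (Pi.single b 1) = (B : ℝ)⁻¹ * (2 * u b) := by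
    simp only [hQ, ContinuousLinearMap.smul_apply, ContinuousLinearMap.sum_apply, hFe,
      smul_eq_mul, mul_sub]
    rw [Finset.sum_sub_distrib]
    have h1 : ∑ c, 2 * u c * (if c = b then (1:ℝ) else 0) = 2 * u b := by
      simp [mul_ite, Finset.sum_ite_eq']
    have h2 : ∑ c, 2 * u c * (B : ℝ)⁻¹ = 0 := by
      rw [← Finset.sum_mul]
      have : ∑ c, 2 * u c = 2 * ∑ c, u c := by rw [Finset.mul_sum]
      rw [this, hsumu]; ring
    rw [h1, h2]; ring
  have hSe : S (Pi.single b 1) = 1 / (2 * σ) * ((B : ℝ)⁻¹ * (2 * u b)) := by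
    simp [hS, hQe, hσx]
  have hΦe : ∀ a, Φ a (Pi.single b 1) =
      u a * (-(σ ^ 2)⁻¹ * (1 / (2 * σ) * ((B : ℝ)⁻¹ * (2 * u b))))
        + σ⁻¹ * ((if a = b then (1:ℝ) else 0) - (B : ℝ)⁻¹) := by
    intro a
    simp [hΦ, hSe, hFe, smul_eq_mul]
  rw [ContinuousLinearMap.comp_apply]
  rw [clm_eval]
  have hpi : ∀ a, (ContinuousLinearMap.pi Φ) (Pi.single b 1) a = Φ a (Pi.single b 1) := by
    intro a; simp
  simp only [hpi, hΦe]
  -- now pure algebra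
  set ℓ : Fin B → ℝ := fun a => fderiv ℝ L (batchNorm x) (Pi.single a 1) with hℓ
  set c : ℝ := -(σ ^ 2)⁻¹ * (1 / (2 * σ) * ((B : ℝ)⁻¹ * (2 * u b))) with hc
  have hterm : ∀ a : Fin B,
      (u a * c + σ⁻¹ * ((if a = b then (1:ℝ) else 0) - (B : ℝ)⁻¹)) * ℓ a
        = c * (u a * ℓ a) + σ⁻¹ * ((if a = b then (1:ℝ) else 0) * ℓ a)
            - σ⁻¹ * (B : ℝ)⁻¹ * ℓ a := fun a => by ring
  have hLHS : ∑ a, (u a * c + σ⁻¹ * ((if a = b then (1:ℝ) else 0) - (B : ℝ)⁻¹)) * ℓ a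
      = c * (∑ a, u a * ℓ a) + σ⁻¹ * ℓ b - σ⁻¹ * (B : ℝ)⁻¹ * (∑ a, ℓ a) := by
    simp only [hterm]
    rw [Finset.sum_sub_distrib, Finset.sum_add_distrib, ← Finset.mul_sum, ← Finset.mul_sum,
      ← Finset.mul_sum]
    congr 2
    simp [ite_mul, Finset.sum_ite_eq']
  rw [hLHS]
  have hbn : ∀ a : Fin B, batchNorm x a = u a / σ := fun a => rfl
  simp only [hbn]
  have hsum2 : ∑ a, u a / σ * ℓ a = (∑ a, u a * ℓ a) / σ := by
    simp only [div_mul_eq_mul_div, ← Finset.sum_div]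
  rw [hsum2, hc]
  field_simp
  ring
end

section
/- Fix B ≥ 1, let x ∈ ℝ^B be a point where χ(x) > 0, and let L : ℝ^B → ℝ be differentiable at y(x). Then L ∘ y is differentiable at x and its partial derivatives satisfy the modified-normalization backward formula: ∂(L∘y)/∂x_b (x) = (1/χ(x)) · (∂L/∂y_b (y(x)) − y_b(x)·Ψ), where Ψ = (1/B) Σ_{a=1}^B y_a(x) · ∂L/∂y_a (y(x)). -/
open scoped BigOperators

/-- Batch root-mean-square `χ(x) = sqrt((1/B) ∑_b x_b²)`. -/
noncomputable def batchRms {B : ℕ} (x : Fin B → ℝ) : ℝ :=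
  Real.sqrt ((∑ b, x b ^ 2) / B)

/-- Modified normalization map `y_a(x) = x_a / χ(x)`. -/
noncomputable def modNorm {B : ℕ} (x : Fin B → ℝ) : Fin B → ℝ :=
  fun a => x a / batchRms x

lemma modNorm_hasFDerivAt (hB : 1 ≤ B) (x : Fin B → ℝ) (hχ : 0 < batchRms x) :
    HasFDerivAt (modNorm (B := B))
      ((batchRms x)⁻¹ • ContinuousLinearMap.id ℝ (Fin B → ℝ) +
        ((-(((batchRms x ^ 2)⁻¹ * (1 / (2 * batchRms x))) •
          ((B : ℝ)⁻¹ • ∑ b, (2 * x b ^ 1) • ContinuousLinearMap.proj (R := ℝ) (φ := fun _ : Fin B => ℝ) b))).smulRight x)) x := by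
  set χ := batchRms x with hχdef
  have hne : χ ≠ 0 := ne_of_gt hχ
  -- derivative of sum of squares
  have hsq : HasFDerivAt (fun z : Fin B → ℝ => ∑ b, z b ^ 2)
      (∑ b, (2 * x b ^ 1) • ContinuousLinearMap.proj (R := ℝ) (φ := fun _ : Fin B => ℝ) b) x := by
    apply HasFDerivAt.fun_sum
    intro b _
    exact (hasDerivAt_pow 2 (x b)).comp_hasFDerivAt x
      (ContinuousLinearMap.proj (R := ℝ) (φ := fun _ : Fin B => ℝ) b).hasFDerivAt
  have hg : HasFDerivAt (fun z : Fin B → ℝ => (∑ b, z b ^ 2) / B)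
      ((B : ℝ)⁻¹ • ∑ b, (2 * x b ^ 1) • ContinuousLinearMap.proj (R := ℝ) (φ := fun _ : Fin B => ℝ) b) x := by
    simpa [div_eq_inv_mul, smul_smul, mul_comm, Pi.smul_def] using hsq.const_smul ((B : ℝ)⁻¹)
  -- χ = sqrt ∘ g
  have hS : (∑ b, x b ^ 2) / B ≠ 0 := by
    intro h
    rw [hχdef, batchRms, h, Real.sqrt_zero] at hχ
    exact lt_irrefl 0 hχ
  have hχ' : HasFDerivAt (batchRms (B := B))
      ((1 / (2 * χ)) • ((B : ℝ)⁻¹ • ∑ b, (2 * x b ^ 1) • ContinuousLinearMap.proj (R := ℝ) (φ := fun _ : Fin B => ℝ) b)) x := by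
    have := (Real.hasDerivAt_sqrt hS).comp_hasFDerivAt x hg
    show HasFDerivAt (fun z : Fin B → ℝ => Real.sqrt ((∑ b, z b ^ 2) / B)) _ x
    simpa [batchRms, Function.comp_def, hχdef] using this
  have hinv : HasFDerivAt (fun z : Fin B → ℝ => (batchRms z)⁻¹)
      (-(((χ ^ 2)⁻¹ * (1 / (2 * χ))) • ((B : ℝ)⁻¹ • ∑ b, (2 * x b ^ 1) • ContinuousLinearMap.proj (R := ℝ) (φ := fun _ : Fin B => ℝ) b))) x := by
    have := (hasDerivAt_inv hne).comp_hasFDerivAt x hχ'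
    simpa [Function.comp_def, neg_smul, smul_smul, mul_assoc] using this
  have hid : HasFDerivAt (fun z : Fin B → ℝ => z) (ContinuousLinearMap.id ℝ (Fin B → ℝ)) x :=
    hasFDerivAt_id x
  have h := hinv.smul hid
  have hmod : modNorm (B := B) = fun z : Fin B → ℝ => (batchRms z)⁻¹ • z := by
    funext z a
    simp [modNorm, div_eq_inv_mul]
  rw [hmod]
  exact h


/-- For `B ≥ 1`, `x ∈ ℝ^B` with `χ(x) > 0`, and `L : ℝ^B → ℝ` differentiable at
`y(x)`, the composite `L ∘ y` is differentiable at `x` and satisfies the modified-normalization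
backward formula `∂(L∘y)/∂x_b = (1/χ(x)) (∂L/∂y_b - y_b(x) Ψ)`, where
`Ψ = (1/B) ∑_a y_a(x) ∂L/∂y_a`. -/
theorem modNorm_backward
    {B : ℕ} (hB : 1 ≤ B) (x : Fin B → ℝ) (hχ : 0 < batchRms x)
    (L : (Fin B → ℝ) → ℝ) (hL : DifferentiableAt ℝ L (modNorm x)) :
    DifferentiableAt ℝ (L ∘ modNorm (B := B)) x ∧
    ∀ b : Fin B,
      fderiv ℝ (L ∘ modNorm (B := B)) x (Pi.single b 1) =
        (1 / batchRms x) *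
          (fderiv ℝ L (modNorm x) (Pi.single b 1)
            - modNorm x b *
                ((∑ a, modNorm x a * fderiv ℝ L (modNorm x) (Pi.single a 1)) / B)) := by
  have hne : batchRms x ≠ 0 := ne_of_gt hχ
  have hBne : (B : ℝ) ≠ 0 := Nat.cast_ne_zero.mpr (by omega)
  have hmod := modNorm_hasFDerivAt hB x hχ
  have hcomp := (hL.hasFDerivAt).comp x hmod
  refine ⟨hcomp.differentiableAt, ?_⟩
  intro b
  rw [hcomp.fderiv]
  set χ := batchRms x with hχdef
  set f' := fderiv ℝ L (modNorm x) with hf'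
  have hxv : f' x = ∑ a, x a * f' (Pi.single a 1) := by
    conv_lhs => rw [← Finset.univ_sum_single x, map_sum]
    refine Finset.sum_congr rfl fun a _ => ?_
    have h1 : (Pi.single a (x a) : Fin B → ℝ) = x a • (Pi.single a (1:ℝ) : Fin B → ℝ) := by
      funext j
      by_cases h : j = a <;> simp [Pi.single_apply, h]
    rw [h1, map_smul, smul_eq_mul]
  have hsum : ∑ a, modNorm x a * f' (Pi.single a 1) = χ⁻¹ * f' x := by
    rw [hxv, Finset.mul_sum]
    refine Finset.sum_congr rfl fun a _ => ?_
    simp [modNorm, div_eq_inv_mul, ← hχdef]; ring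
  rw [hsum]
  simp only [ContinuousLinearMap.coe_comp', Function.comp_apply,
    ContinuousLinearMap.add_apply, ContinuousLinearMap.smul_apply,
    ContinuousLinearMap.id_apply, ContinuousLinearMap.smulRight_apply,
    ContinuousLinearMap.neg_apply, ContinuousLinearMap.coe_sum',
    Finset.sum_apply, ContinuousLinearMap.proj_apply, map_add, map_smul,
    smul_eq_mul, map_neg, ← hf']
  have hsingle : (∑ a : Fin B, 2 * x a ^ 1 * (Pi.single b (1:ℝ) : Fin B → ℝ) a) = 2 * x b := by
    simp [Pi.single_apply]
  rw [hsingle, hχdef, modNorm]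
  have hne2 : batchRms x ≠ 0 := hne
  field_simp
  ring
end
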